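/- arXiv:2601.19800 — 10 statements merged into one kernel-verified Lean document; each statement's English description precedes it below -/
import Mathlib

section
/- If g is an indicator variogram on X, then there exist a probability space (Ω, P) and a family Y : X → Ω → ℝ of random variables such that: (i) for every pair x, y ∈ X there is a probability measure ν_{x,y} on [−1,1] for which the joint law of (Y x, Y y) equals the mixture ∫_{[−1,1]} μ_r dν_{x,y}(r), where μ_r denotes the law of (U, r·U + √(1−r²)·V) for U, V independent standard Gaussian N(0,1) random variables (so that, in particular, each Y x is standard Gaussian with median 0); and (ii) g(x,y) = (1/2)·E[(1_{Y x ≥ 0} − 1_{Y y ≥ 0})²] for all x, y ∈ X. That is, every indicator variogram is the median indicator variogram of a Hermitian random field. -/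
open MeasureTheory Real ProbabilityTheory
open scoped ENNReal

/-- `g : X × X → ℝ` is an indicator variogram on `X`. -/
def IsIndicatorVariogram (X : Type*) (g : X × X → ℝ) : Prop :=
  ∃ (Ω : Type) (_ : MeasurableSpace Ω) (P : Measure Ω),
    IsProbabilityMeasure P ∧
    ∃ Z : X → Ω → ℝ,
      (∀ x, Measurable (Z x)) ∧
      (∀ x ω, Z x ω = 0 ∨ Z x ω = 1) ∧
      (∃ c : ℝ, ∀ x, ∫ ω, Z x ω ∂P = c) ∧
      (∀ x y, g (x, y) = (1 / 2) * ∫ ω, (Z x ω - Z y ω) ^ 2 ∂P)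

/-- The centered bivariate Gaussian law with standard `N(0,1)` marginals and correlation `r`:
the law of `(U, r·U + √(1−r²)·V)` with `U, V` independent standard Gaussians. -/
noncomputable def bivariateGaussian (r : ℝ) : Measure (ℝ × ℝ) :=
  Measure.map (fun uv : ℝ × ℝ => (uv.1, r * uv.1 + Real.sqrt (1 - r ^ 2) * uv.2))
    ((gaussianReal 0 1).prod (gaussianReal 0 1))

section helpers

lemma measurable_bivGaussFun (r : ℝ) :
    Measurable (fun uv : ℝ × ℝ => (uv.1, r * uv.1 + Real.sqrt (1 - r ^ 2) * uv.2)) := by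
  fun_prop

lemma measurable_bivariateGaussian : Measurable bivariateGaussian := by
  apply Measure.measurable_of_measurable_coe
  intro s hs
  have h1 : (fun r => bivariateGaussian r s)
      = fun r => ((gaussianReal 0 1).prod (gaussianReal 0 1))
          ((fun uv : ℝ × ℝ => (uv.1, r * uv.1 + Real.sqrt (1 - r ^ 2) * uv.2)) ⁻¹' s) :=
    funext fun r => Measure.map_apply (measurable_bivGaussFun r) hs
  rw [h1]
  have hG : Measurable (fun p : ℝ × (ℝ × ℝ) =>
      (p.2.1, p.1 * p.2.1 + Real.sqrt (1 - p.1 ^ 2) * p.2.2)) := by fun_prop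
  exact measurable_measure_prodMk_left (hG hs)

lemma bind_two_diracs (c d : ℝ≥0∞) (a b : ℝ) {f : ℝ → Measure (ℝ × ℝ)} (hf : Measurable f) :
    (c • Measure.dirac a + d • Measure.dirac b).bind f = c • f a + d • f b := by
  ext s hs
  rw [Measure.bind_apply hs hf.aemeasurable, lintegral_add_measure, lintegral_smul_measure,
    lintegral_smul_measure]
  rw [show (fun r => f r s) = (fun μ : Measure (ℝ × ℝ) => μ s) ∘ f from rfl,
    lintegral_dirac' a ((Measure.measurable_coe hs).comp hf),
    lintegral_dirac' b ((Measure.measurable_coe hs).comp hf)]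
  simp [Measure.add_apply]

lemma map_piece {Ω : Type} [MeasurableSpace Ω] (P : Measure Ω) [SFinite P] (γ : Measure ℝ)
    [SFinite γ] {S : Set Ω} (hS : MeasurableSet S) {f : Ω × ℝ → ℝ × ℝ} (hf : Measurable f)
    {h : ℝ → ℝ × ℝ} (hh : Measurable h) (heq : ∀ ω ∈ S, ∀ u : ℝ, f (ω, u) = h u) :
    Measure.map f ((P.restrict S).prod γ) = P S • Measure.map h γ := by
  have hmap : Measure.map f ((P.restrict S).prod γ)
      = Measure.map (h ∘ Prod.snd) ((P.restrict S).prod γ) := by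
    apply Measure.map_congr
    rw [Measure.restrict_prod_eq_prod_univ]
    filter_upwards [ae_restrict_mem (hS.prod MeasurableSet.univ)] with p hp
    exact heq p.1 hp.1 p.2
  rw [hmap, ← Measure.map_map hh measurable_snd, Measure.map_snd_prod,
    Measure.restrict_apply_univ, Measure.map_smul]

lemma gauss_map_neg : (gaussianReal 0 1).map (fun u : ℝ => -u) = gaussianReal 0 1 := by
  have h := gaussianReal_map_const_mul (μ := 0) (v := 1) (-1)
  have h2 : (fun u : ℝ => -u) = ((-1 : ℝ) * ·) := by funext u; ring
  rw [h2, h]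
  norm_num

lemma gauss_singleton_zero : (gaussianReal 0 1) {(0:ℝ)} = 0 := by
  rw [gaussianReal_of_var_ne_zero 0 one_ne_zero]
  exact withDensity_absolutelyContinuous _ _ (by simp)

lemma bivGauss_one :
    bivariateGaussian 1 = (gaussianReal 0 1).map (fun u : ℝ => (u, u)) := by
  rw [bivariateGaussian]
  have h2 : (fun uv : ℝ × ℝ => (uv.1, (1:ℝ) * uv.1 + Real.sqrt (1 - 1 ^ 2) * uv.2))
      = (fun u : ℝ => (u, u)) ∘ Prod.fst := by
    funext uv; simp
  rw [h2, ← Measure.map_map (by fun_prop) measurable_fst, Measure.map_fst_prod, measure_univ,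
    one_smul]

lemma bivGauss_neg_one :
    bivariateGaussian (-1) = (gaussianReal 0 1).map (fun u : ℝ => (u, -u)) := by
  rw [bivariateGaussian]
  have h2 : (fun uv : ℝ × ℝ => (uv.1, (-1:ℝ) * uv.1 + Real.sqrt (1 - (-1) ^ 2) * uv.2))
      = (fun u : ℝ => (u, -u)) ∘ Prod.fst := by
    funext uv; norm_num
  rw [h2, ← Measure.map_map (by fun_prop) measurable_fst, Measure.map_fst_prod, measure_univ,
    one_smul]

lemma gauss_map_negneg :
    (gaussianReal 0 1).map (fun u : ℝ => (-u, -u)) = (gaussianReal 0 1).map (fun u : ℝ => (u, u)) := by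
  have h : (fun u : ℝ => (-u, -u)) = (fun u : ℝ => (u, u)) ∘ (fun u : ℝ => -u) := rfl
  rw [h, ← Measure.map_map (by fun_prop) (by fun_prop), gauss_map_neg]

lemma gauss_map_negpos :
    (gaussianReal 0 1).map (fun u : ℝ => (-u, u)) = (gaussianReal 0 1).map (fun u : ℝ => (u, -u)) := by
  have h : (fun u : ℝ => (-u, u)) = (fun u : ℝ => (u, -u)) ∘ (fun u : ℝ => -u) := by
    funext u; simp
  rw [h, ← Measure.map_map (by fun_prop) (by fun_prop), gauss_map_neg]

end helpers

/-- Every indicator variogram on `X` is the median indicator variogram of a Hermitian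
random field: there are a probability space `(Ω, P)` and `Y : X → Ω → ℝ` such that every
bivariate law of `(Y x, Y y)` is a mixture of bivariate Gaussian laws with standard
marginals (mixing over the correlation `r ∈ [−1,1]`), and
`g (x,y) = (1/2)·E[(1_{Y x ≥ 0} − 1_{Y y ≥ 0})²]`. -/
theorem isIndicatorVariogram_is_median_of_hermitian (X : Type*) (g : X × X → ℝ)
    (hg : IsIndicatorVariogram X g) :
    ∃ (Ω : Type) (_ : MeasurableSpace Ω) (P : Measure Ω),
      IsProbabilityMeasure P ∧
      ∃ Y : X → Ω → ℝ,
        (∀ x, Measurable (Y x)) ∧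
        (∀ x y : X, ∃ ν : Measure ℝ, IsProbabilityMeasure ν ∧
          ν (Set.Icc (-1 : ℝ) 1)ᶜ = 0 ∧
          Measure.map (fun ω => (Y x ω, Y y ω)) P = ν.bind bivariateGaussian) ∧
        (∀ x y : X, g (x, y) = (1 / 2) *
          ∫ ω, ((if 0 ≤ Y x ω then (1 : ℝ) else 0) - (if 0 ≤ Y y ω then (1 : ℝ) else 0)) ^ 2
            ∂P) := by
  obtain ⟨Ω, mΩ, P, hP, Z, hZm, hZ01, ⟨c, hc⟩, hgZ⟩ := hg
  set γ : Measure ℝ := gaussianReal 0 1 with hγ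
  haveI : IsProbabilityMeasure γ := by rw [hγ]; infer_instance
  refine ⟨Ω × ℝ, inferInstance, P.prod γ, inferInstance,
    fun x p => (2 * Z x p.1 - 1) * p.2, ?_, ?_, ?_⟩
  · intro x
    exact ((((hZm x).comp measurable_fst).const_mul 2).sub measurable_const).mul measurable_snd
  · intro x y
    have mYx : Measurable (fun p : Ω × ℝ => (2 * Z x p.1 - 1) * p.2) :=
      ((((hZm x).comp measurable_fst).const_mul 2).sub measurable_const).mul measurable_snd
    have mYy : Measurable (fun p : Ω × ℝ => (2 * Z y p.1 - 1) * p.2) :=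
      ((((hZm y).comp measurable_fst).const_mul 2).sub measurable_const).mul measurable_snd
    have hf : Measurable (fun p : Ω × ℝ =>
        ((2 * Z x p.1 - 1) * p.2, (2 * Z y p.1 - 1) * p.2)) := mYx.prodMk mYy
    set A : Set Ω := Z x ⁻¹' {1} with hAdef
    set B : Set Ω := Z y ⁻¹' {1} with hBdef
    have hA : MeasurableSet A := (hZm x) (measurableSet_singleton 1)
    have hB : MeasurableSet B := (hZm y) (measurableSet_singleton 1)
    have hZx1 : ∀ ω ∈ A, Z x ω = 1 := fun ω h => h
    have hZx0 : ∀ ω ∉ A, Z x ω = 0 := fun ω h =>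
      (hZ01 x ω).resolve_right (fun h1 => h h1)
    have hZy1 : ∀ ω ∈ B, Z y ω = 1 := fun ω h => h
    have hZy0 : ∀ ω ∉ B, Z y ω = 0 := fun ω h =>
      (hZ01 y ω).resolve_right (fun h1 => h h1)
    refine ⟨(P (A ∩ B) + P (Aᶜ \ B)) • Measure.dirac 1
        + (P (A \ B) + P (Aᶜ ∩ B)) • Measure.dirac (-1), ?_, ?_, ?_⟩
    · constructor
      have e1 : P (A ∩ B) + P (A \ B) = P A := measure_inter_add_diff A hB
      have e2 : P (Aᶜ ∩ B) + P (Aᶜ \ B) = P Aᶜ := measure_inter_add_diff Aᶜ hB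
      have e3 : P A + P Aᶜ = 1 := by
        rw [measure_add_measure_compl hA, measure_univ]
      simp only [Measure.add_apply, Measure.smul_apply, measure_univ, smul_eq_mul, mul_one]
      calc P (A ∩ B) + P (Aᶜ \ B) + (P (A \ B) + P (Aᶜ ∩ B))
          = (P (A ∩ B) + P (A \ B)) + (P (Aᶜ ∩ B) + P (Aᶜ \ B)) := by ring
        _ = 1 := by rw [e1, e2, e3]
    · have h1 : (1:ℝ) ∈ Set.Icc (-1:ℝ) 1 := by norm_num
      have h2 : (-1:ℝ) ∈ Set.Icc (-1:ℝ) 1 := by norm_num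
      simp only [Measure.add_apply, Measure.smul_apply, smul_eq_mul]
      rw [Measure.dirac_apply' _ measurableSet_Icc.compl,
        Measure.dirac_apply' _ measurableSet_Icc.compl]
      simp [Set.indicator, h1, h2]
    · have h12 : Disjoint (A ∩ B) (A \ B) :=
        Set.disjoint_left.mpr (fun ω h1 h2 => h2.2 h1.2)
      have h34 : Disjoint (Aᶜ ∩ B) (Aᶜ \ B) :=
        Set.disjoint_left.mpr (fun ω h1 h2 => h2.2 h1.2)
      have hdecomp : P.restrict (A ∩ B) + P.restrict (A \ B)
          + (P.restrict (Aᶜ ∩ B) + P.restrict (Aᶜ \ B)) = P := by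
        rw [← Measure.restrict_union h12 (hA.diff hB),
          ← Measure.restrict_union h34 (hA.compl.diff hB),
          Set.inter_union_diff, Set.inter_union_diff,
          Measure.restrict_add_restrict_compl hA]
      have heq1 : ∀ ω ∈ A ∩ B, ∀ u : ℝ,
          ((2 * Z x ω - 1) * u, (2 * Z y ω - 1) * u) = ((u, u) : ℝ × ℝ) := by
        intro ω hω u
        rw [hZx1 ω hω.1, hZy1 ω hω.2]; norm_num
      have heq2 : ∀ ω ∈ A \ B, ∀ u : ℝ,
          ((2 * Z x ω - 1) * u, (2 * Z y ω - 1) * u) = ((u, -u) : ℝ × ℝ) := by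
        intro ω hω u
        rw [hZx1 ω hω.1, hZy0 ω hω.2]; norm_num
      have heq3 : ∀ ω ∈ Aᶜ ∩ B, ∀ u : ℝ,
          ((2 * Z x ω - 1) * u, (2 * Z y ω - 1) * u) = ((-u, u) : ℝ × ℝ) := by
        intro ω hω u
        rw [hZx0 ω hω.1, hZy1 ω hω.2]; norm_num
      have heq4 : ∀ ω ∈ Aᶜ \ B, ∀ u : ℝ,
          ((2 * Z x ω - 1) * u, (2 * Z y ω - 1) * u) = ((-u, -u) : ℝ × ℝ) := by
        intro ω hω u
        rw [hZx0 ω hω.1, hZy0 ω hω.2]; norm_num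
      calc Measure.map (fun p : Ω × ℝ => ((2 * Z x p.1 - 1) * p.2, (2 * Z y p.1 - 1) * p.2))
            (P.prod γ)
          = Measure.map (fun p : Ω × ℝ => ((2 * Z x p.1 - 1) * p.2, (2 * Z y p.1 - 1) * p.2))
            ((P.restrict (A ∩ B) + P.restrict (A \ B)
              + (P.restrict (Aᶜ ∩ B) + P.restrict (Aᶜ \ B))).prod γ) := by rw [hdecomp]
        _ = P (A ∩ B) • γ.map (fun u : ℝ => (u, u))
              + P (A \ B) • γ.map (fun u : ℝ => (u, -u))
              + (P (Aᶜ ∩ B) • γ.map (fun u : ℝ => (u, -u))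
                + P (Aᶜ \ B) • γ.map (fun u : ℝ => (u, u))) := by
            rw [Measure.add_prod, Measure.add_prod, Measure.add_prod,
              Measure.map_add _ _ hf, Measure.map_add _ _ hf, Measure.map_add _ _ hf,
              map_piece P γ (hA.inter hB) hf (by fun_prop) (fun ω hω u => heq1 ω hω u),
              map_piece P γ (hA.diff hB) hf (by fun_prop) (fun ω hω u => heq2 ω hω u),
              map_piece P γ (hA.compl.inter hB) hf (by fun_prop) (fun ω hω u => heq3 ω hω u),
              map_piece P γ (hA.compl.diff hB) hf (by fun_prop) (fun ω hω u => heq4 ω hω u),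
              gauss_map_negpos, gauss_map_negneg]
        _ = ((P (A ∩ B) + P (Aᶜ \ B)) • Measure.dirac (1:ℝ)
              + (P (A \ B) + P (Aᶜ ∩ B)) • Measure.dirac (-1:ℝ)).bind bivariateGaussian := by
            rw [bind_two_diracs _ _ _ _ measurable_bivariateGaussian,
              bivGauss_one, bivGauss_neg_one, add_smul, add_smul]
            abel
  · intro x y
    have hptwise : ∀ p : Ω × ℝ, p.2 ≠ 0 →
        ((if 0 ≤ (2 * Z x p.1 - 1) * p.2 then (1:ℝ) else 0)
          - (if 0 ≤ (2 * Z y p.1 - 1) * p.2 then (1:ℝ) else 0)) ^ 2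
        = (Z x p.1 - Z y p.1) ^ 2 := by
      intro p hp
      rcases hZ01 x p.1 with h1 | h1 <;> rcases hZ01 y p.1 with h2 | h2 <;>
        rw [h1, h2] <;> norm_num <;>
        rcases lt_or_gt_of_ne hp with hu | hu
      · rw [if_pos (by nlinarith), if_neg (by nlinarith)]; norm_num
      · rw [if_neg (by nlinarith), if_pos (by nlinarith)]; norm_num
      · rw [if_neg (by nlinarith), if_pos (by nlinarith)]; norm_num
      · rw [if_pos (by nlinarith), if_neg (by nlinarith)]; norm_num
    have hnull : (P.prod γ) {p : Ω × ℝ | p.2 = 0} = 0 := by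
      have h0 : {p : Ω × ℝ | p.2 = 0} = Set.univ ×ˢ ({0} : Set ℝ) := by
        ext p
        simp only [Set.mem_setOf_eq, Set.mem_prod, Set.mem_univ, Set.mem_singleton_iff, true_and]
      rw [h0, Measure.prod_prod, hγ, gauss_singleton_zero, mul_zero]
    have hae : (fun p : Ω × ℝ =>
        ((if 0 ≤ (2 * Z x p.1 - 1) * p.2 then (1:ℝ) else 0)
          - (if 0 ≤ (2 * Z y p.1 - 1) * p.2 then (1:ℝ) else 0)) ^ 2)
        =ᵐ[P.prod γ] fun p => (Z x p.1 - Z y p.1) ^ 2 := by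
      rw [Filter.EventuallyEq, ae_iff]
      refine measure_mono_null (fun p hp => ?_) hnull
      by_contra h
      exact hp (hptwise p h)
    have hsm : AEStronglyMeasurable (fun ω => (Z x ω - Z y ω) ^ 2)
        (Measure.map Prod.fst (P.prod γ)) :=
      (((hZm x).sub (hZm y)).pow_const 2).aestronglyMeasurable
    have hfst : ∫ p : Ω × ℝ, (Z x p.1 - Z y p.1) ^ 2 ∂(P.prod γ)
        = ∫ ω, (Z x ω - Z y ω) ^ 2 ∂P := by
      rw [← integral_map measurable_fst.aemeasurable hsm, Measure.map_fst_prod, measure_univ,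
        one_smul]
    rw [integral_congr_ae hae, hfst]
    exact hgZ x y
end

section
/- Let g and g′ be indicator variograms on X and let ϖ ∈ [0,1]. Then (i) the function (x,y) ↦ ϖ·g(x,y) is an indicator variogram on X, and (ii) the function (x,y) ↦ ϖ·g(x,y) + (1−ϖ)·g′(x,y) is an indicator variogram on X. -/
open MeasureTheory Real

lemma mix_integral {Ω Ω' : Type} [MeasurableSpace Ω] [MeasurableSpace Ω']
    (P : Measure Ω) (P' : Measure Ω') [IsProbabilityMeasure P] [IsProbabilityMeasure P']
    (ϖ : ℝ) (h0 : 0 ≤ ϖ) (h1 : ϖ ≤ 1)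
    (f : Ω → ℝ) (f' : Ω' → ℝ) (hf : Measurable f) (hf' : Measurable f')
    (hbf : ∀ ω, ‖f ω‖ ≤ 1) (hbf' : ∀ ω, ‖f' ω‖ ≤ 1) :
    ∫ ω : Bool × Ω × Ω', (if ω.1 then f ω.2.1 else f' ω.2.2)
        ∂((ENNReal.ofReal ϖ • Measure.dirac true
            + ENNReal.ofReal (1 - ϖ) • Measure.dirac false).prod (P.prod P'))
      = ϖ * ∫ ω, f ω ∂P + (1 - ϖ) * ∫ ω, f' ω ∂P' := by
  set μB : Measure Bool := ENNReal.ofReal ϖ • Measure.dirac true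
      + ENNReal.ofReal (1 - ϖ) • Measure.dirac false with hμB
  haveI : IsProbabilityMeasure μB := by
    constructor
    simp [hμB, ← ENNReal.ofReal_add h0 (by linarith : (0:ℝ) ≤ 1 - ϖ)]
  set F : Bool × Ω × Ω' → ℝ := fun ω => if ω.1 then f ω.2.1 else f' ω.2.2 with hF
  have hFm : Measurable F := by
    apply Measurable.ite
    · exact measurable_fst (measurableSet_singleton true)
    · exact hf.comp (measurable_fst.comp measurable_snd)
    · exact hf'.comp (measurable_snd.comp measurable_snd)
  have hFb : ∀ ω, ‖F ω‖ ≤ 1 := by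
    intro ω
    rcases ω with ⟨b, ω, ω'⟩
    cases b <;> simp only [hF, if_true, if_false, Bool.false_eq_true, Real.norm_eq_abs] <;>
      [exact hbf' ω'; exact hbf ω]
  have hFi : Integrable F (μB.prod (P.prod P')) :=
    (integrable_const (1:ℝ)).mono' hFm.aestronglyMeasurable (ae_of_all _ hFb)
  rw [MeasureTheory.integral_prod _ hFi]
  have hinner : ∀ b : Bool, (∫ p : Ω × Ω', F (b, p) ∂(P.prod P'))
      = if b then ∫ ω, f ω ∂P else ∫ ω, f' ω ∂P' := by
    intro b
    cases b
    · simp only [hF, if_false, Bool.false_eq_true]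
      rw [← integral_map measurable_snd.aemeasurable hf'.aestronglyMeasurable,
        show Measure.map Prod.snd (P.prod P') = P' from Measure.snd_prod]
    · simp only [hF, if_true]
      rw [← integral_map measurable_fst.aemeasurable hf.aestronglyMeasurable,
        show Measure.map Prod.fst (P.prod P') = P from Measure.fst_prod]
  simp only [hinner]
  set G : Bool → ℝ := fun b => if b then ∫ ω, f ω ∂P else ∫ ω, f' ω ∂P' with hG
  have hGb : ∀ b, ‖G b‖ ≤ 1 := by
    intro b
    have h1' : ‖∫ ω, f ω ∂P‖ ≤ 1 := by
      calc ‖∫ ω, f ω ∂P‖ ≤ ∫ ω, ‖f ω‖ ∂P := norm_integral_le_integral_norm f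
        _ ≤ ∫ _ : Ω, (1:ℝ) ∂P := integral_mono ((integrable_const 1).mono'
              hf.norm.aestronglyMeasurable (ae_of_all _ (by simpa using hbf)))
              (integrable_const 1) hbf
        _ = 1 := by simp
    have h2' : ‖∫ ω, f' ω ∂P'‖ ≤ 1 := by
      calc ‖∫ ω, f' ω ∂P'‖ ≤ ∫ ω, ‖f' ω‖ ∂P' := norm_integral_le_integral_norm f'
        _ ≤ ∫ _ : Ω', (1:ℝ) ∂P' := integral_mono ((integrable_const 1).mono'
              hf'.norm.aestronglyMeasurable (ae_of_all _ (by simpa using hbf')))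
              (integrable_const 1) hbf'
        _ = 1 := by simp
    cases b <;> simpa [hG]
  have hGi : Integrable G μB :=
    (integrable_const (1:ℝ)).mono' (measurable_of_countable G).aestronglyMeasurable
      (ae_of_all _ hGb)
  rw [hμB] at hGi ⊢
  rw [integral_add_measure hGi.left_of_add_measure hGi.right_of_add_measure,
    integral_smul_measure, integral_smul_measure, integral_dirac, integral_dirac]
  simp [hG, ENNReal.toReal_ofReal h0, ENNReal.toReal_ofReal (by linarith : (0:ℝ) ≤ 1 - ϖ)]

lemma indicatorVariogram_mix (X : Type*) (g g' : X × X → ℝ)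
    (hg : IsIndicatorVariogram X g) (hg' : IsIndicatorVariogram X g')
    (ϖ : ℝ) (h0 : 0 ≤ ϖ) (h1 : ϖ ≤ 1) :
    IsIndicatorVariogram X (fun p => ϖ * g p + (1 - ϖ) * g' p) := by
  obtain ⟨Ω, mΩ, P, hP, Z, hZm, hZ01, ⟨c, hc⟩, hgZ⟩ := hg
  obtain ⟨Ω', mΩ', P', hP', Z', hZm', hZ01', ⟨c', hc'⟩, hgZ'⟩ := hg'
  haveI := hP; haveI := hP'
  set μB : Measure Bool := ENNReal.ofReal ϖ • Measure.dirac true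
      + ENNReal.ofReal (1 - ϖ) • Measure.dirac false with hμB
  haveI : IsProbabilityMeasure μB := by
    constructor
    simp [hμB, ← ENNReal.ofReal_add h0 (by linarith : (0:ℝ) ≤ 1 - ϖ)]
  refine ⟨Bool × Ω × Ω', inferInstance, μB.prod (P.prod P'), inferInstance,
    fun x ω => if ω.1 then Z x ω.2.1 else Z' x ω.2.2, ?_, ?_, ⟨ϖ * c + (1 - ϖ) * c', ?_⟩, ?_⟩
  · intro x
    exact Measurable.ite (measurable_fst (measurableSet_singleton true))
      ((hZm x).comp (measurable_fst.comp measurable_snd))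
      ((hZm' x).comp (measurable_snd.comp measurable_snd))
  · rintro x ⟨b, ω, ω'⟩
    cases b
    · simpa using hZ01' x ω'
    · simpa using hZ01 x ω
  · intro x
    have h01 : ∀ (a : ℝ), a = 0 ∨ a = 1 → ‖a‖ ≤ 1 := by
      rintro a (rfl | rfl) <;> norm_num
    rw [mix_integral P P' ϖ h0 h1 (Z x) (Z' x) (hZm x) (hZm' x)
      (fun ω => h01 _ (hZ01 x ω)) (fun ω' => h01 _ (hZ01' x ω')), hc, hc']
  · intro x y
    have key : ∀ ω : Bool × Ω × Ω',
        ((if ω.1 then Z x ω.2.1 else Z' x ω.2.2) - (if ω.1 then Z y ω.2.1 else Z' y ω.2.2)) ^ 2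
        = if ω.1 then (Z x ω.2.1 - Z y ω.2.1) ^ 2 else (Z' x ω.2.2 - Z' y ω.2.2) ^ 2 := by
      rintro ⟨b, ω, ω'⟩; cases b <;> simp
    have hsq : ∀ (a b : ℝ), (a = 0 ∨ a = 1) → (b = 0 ∨ b = 1) → ‖(a - b) ^ 2‖ ≤ 1 := by
      rintro a b (rfl | rfl) (rfl | rfl) <;> norm_num
    simp only [key]
    rw [mix_integral P P' ϖ h0 h1 (fun ω => (Z x ω - Z y ω) ^ 2)
      (fun ω' => (Z' x ω' - Z' y ω') ^ 2) (((hZm x).sub (hZm y)).pow_const 2)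
      (((hZm' x).sub (hZm' y)).pow_const 2)
      (fun ω => hsq _ _ (hZ01 x ω) (hZ01 y ω))
      (fun ω' => hsq _ _ (hZ01' x ω') (hZ01' y ω')), hgZ x y, hgZ' x y]
    ring

lemma indicatorVariogram_zero (X : Type*) :
    IsIndicatorVariogram X (fun _ => (0 : ℝ)) := by
  refine ⟨Unit, inferInstance, Measure.dirac (), inferInstance,
    fun _ _ => 0, fun x => measurable_const, fun x ω => Or.inl rfl, ⟨0, fun x => by simp⟩,
    fun x y => by simp⟩

/-- If `g` and `g'` are indicator variograms on `X` and `ϖ ∈ [0,1]`, then so are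
`ϖ·g` and `ϖ·g + (1−ϖ)·g'`. -/
theorem indicatorVariogram_scale_and_mix (X : Type*) (g g' : X × X → ℝ)
    (hg : IsIndicatorVariogram X g) (hg' : IsIndicatorVariogram X g')
    (ϖ : ℝ) (hϖ : ϖ ∈ Set.Icc (0 : ℝ) 1) :
    IsIndicatorVariogram X (fun p => ϖ * g p) ∧
    IsIndicatorVariogram X (fun p => ϖ * g p + (1 - ϖ) * g' p) := by
  obtain ⟨h0, h1⟩ := hϖ
  constructor
  · have := indicatorVariogram_mix X g (fun _ => 0) hg (indicatorVariogram_zero X) ϖ h0 h1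
    simpa using this
  · exact indicatorVariogram_mix X g g' hg hg' ϖ h0 h1
end

section
/- Let g and g′ be indicator variograms on X. Then the function (x,y) ↦ g(x,y) + g′(x,y) − 4·g(x,y)·g′(x,y) is an indicator variogram on X. -/
open MeasureTheory Real

private lemma integrable_of_01 {Ω : Type*} [MeasurableSpace Ω] {P : Measure Ω}
    [IsProbabilityMeasure P] {f : Ω → ℝ} (hf : Measurable f)
    (h01 : ∀ ω, f ω = 0 ∨ f ω = 1) : Integrable f P := by
  refine (integrable_const (1 : ℝ)).mono' hf.aestronglyMeasurable ?_
  filter_upwards with ω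
  rcases h01 ω with h | h <;> simp [h]

private lemma integral_xor_form {Ω Ω' : Type} [MeasurableSpace Ω] [MeasurableSpace Ω']
    (P : Measure Ω) (P' : Measure Ω') [IsProbabilityMeasure P] [IsProbabilityMeasure P']
    {f : Ω → ℝ} {h : Ω' → ℝ} (hf : Measurable f) (hh : Measurable h)
    (hf01 : ∀ ω, f ω = 0 ∨ f ω = 1) (hh01 : ∀ ω, h ω = 0 ∨ h ω = 1) :
    ∫ z, (f z.1 + h z.2 - 2 * (f z.1 * h z.2)) ∂(P.prod P')
      = (∫ ω, f ω ∂P) + (∫ ω, h ω ∂P') - 2 * ((∫ ω, f ω ∂P) * (∫ ω, h ω ∂P')) := by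
  have I1 : Integrable (fun z : Ω × Ω' => f z.1) (P.prod P') :=
    integrable_of_01 (hf.comp measurable_fst) (fun z => hf01 z.1)
  have I2 : Integrable (fun z : Ω × Ω' => h z.2) (P.prod P') :=
    integrable_of_01 (hh.comp measurable_snd) (fun z => hh01 z.2)
  have I3 : Integrable (fun z : Ω × Ω' => f z.1 * h z.2) (P.prod P') := by
    refine integrable_of_01 ((hf.comp measurable_fst).mul (hh.comp measurable_snd)) ?_
    intro z
    rcases hf01 z.1 with h1 | h1 <;> rcases hh01 z.2 with h2 | h2 <;> simp [h1, h2]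
  have e1 : ∫ z, f z.1 ∂(P.prod P') = ∫ ω, f ω ∂P := by
    simpa using integral_prod_mul (μ := P) (ν := P') f (fun _ => (1 : ℝ))
  have e2 : ∫ z, h z.2 ∂(P.prod P') = ∫ ω, h ω ∂P' := by
    simpa using integral_prod_mul (μ := P) (ν := P') (fun _ => (1 : ℝ)) h
  have e3 : ∫ z, f z.1 * h z.2 ∂(P.prod P') = (∫ ω, f ω ∂P) * ∫ ω, h ω ∂P' :=
    integral_prod_mul (μ := P) (ν := P') f h
  calc ∫ z, (f z.1 + h z.2 - 2 * (f z.1 * h z.2)) ∂(P.prod P')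
      = (∫ z, (f z.1 + h z.2) ∂(P.prod P')) - ∫ z, 2 * (f z.1 * h z.2) ∂(P.prod P') :=
        integral_sub (I1.add I2) (I3.const_mul 2)
    _ = ((∫ z, f z.1 ∂(P.prod P')) + ∫ z, h z.2 ∂(P.prod P'))
          - 2 * ∫ z, f z.1 * h z.2 ∂(P.prod P') := by
        rw [integral_add I1 I2, integral_const_mul]
    _ = (∫ ω, f ω ∂P) + (∫ ω, h ω ∂P') - 2 * ((∫ ω, f ω ∂P) * (∫ ω, h ω ∂P')) := by
        rw [e1, e2, e3]

/-- If `g` and `g'` are indicator variograms on `X`, then so is `g + g' − 4·g·g'`. -/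
theorem indicatorVariogram_add_sub_four_mul (X : Type*) (g g' : X × X → ℝ)
    (hg : IsIndicatorVariogram X g) (hg' : IsIndicatorVariogram X g') :
    IsIndicatorVariogram X (fun p => g p + g' p - 4 * g p * g' p) := by
  obtain ⟨Ω, mΩ, P, hP, Z, hZm, hZ01, ⟨c, hc⟩, hgv⟩ := hg
  obtain ⟨Ω', mΩ', P', hP', Z', hZm', hZ01', ⟨c', hc'⟩, hgv'⟩ := hg'
  refine ⟨Ω × Ω', inferInstance, P.prod P', inferInstance,
    fun x ω => Z x ω.1 + Z' x ω.2 - 2 * (Z x ω.1 * Z' x ω.2), ?_, ?_, ?_, ?_⟩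
  · intro x
    exact (((hZm x).comp measurable_fst).add ((hZm' x).comp measurable_snd)).sub
      ((((hZm x).comp measurable_fst).mul ((hZm' x).comp measurable_snd)).const_mul 2)
  · intro x ω
    rcases hZ01 x ω.1 with h1 | h1 <;> rcases hZ01' x ω.2 with h2 | h2 <;>
      norm_num [h1, h2]
  · refine ⟨c + c' - 2 * (c * c'), fun x => ?_⟩
    rw [integral_xor_form P P' (hZm x) (hZm' x) (hZ01 x) (hZ01' x), hc, hc']
  · intro x y
    have key : (fun ω : Ω × Ω' =>
        ((Z x ω.1 + Z' x ω.2 - 2 * (Z x ω.1 * Z' x ω.2)) -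
          (Z y ω.1 + Z' y ω.2 - 2 * (Z y ω.1 * Z' y ω.2))) ^ 2)
        = fun ω : Ω × Ω' =>
          ((Z x ω.1 - Z y ω.1) ^ 2 + (Z' x ω.2 - Z' y ω.2) ^ 2 -
            2 * ((Z x ω.1 - Z y ω.1) ^ 2 * (Z' x ω.2 - Z' y ω.2) ^ 2)) := by
      funext ω
      rcases hZ01 x ω.1 with h1 | h1 <;> rcases hZ01 y ω.1 with h2 | h2 <;>
        rcases hZ01' x ω.2 with h3 | h3 <;> rcases hZ01' y ω.2 with h4 | h4 <;>
        rw [h1, h2, h3, h4] <;> norm_num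
    have u01 : ∀ ω, (Z x ω - Z y ω) ^ 2 = 0 ∨ (Z x ω - Z y ω) ^ 2 = 1 := by
      intro ω
      rcases hZ01 x ω with h1 | h1 <;> rcases hZ01 y ω with h2 | h2 <;>
        rw [h1, h2] <;> norm_num
    have v01 : ∀ ω, (Z' x ω - Z' y ω) ^ 2 = 0 ∨ (Z' x ω - Z' y ω) ^ 2 = 1 := by
      intro ω
      rcases hZ01' x ω with h1 | h1 <;> rcases hZ01' y ω with h2 | h2 <;>
        rw [h1, h2] <;> norm_num
    have hum : Measurable fun ω => (Z x ω - Z y ω) ^ 2 :=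
      ((hZm x).sub (hZm y)).pow_const 2
    have hvm : Measurable fun ω => (Z' x ω - Z' y ω) ^ 2 :=
      ((hZm' x).sub (hZm' y)).pow_const 2
    have hgx : ∫ ω, (Z x ω - Z y ω) ^ 2 ∂P = 2 * g (x, y) := by
      have := hgv x y; linarith
    have hgx' : ∫ ω, (Z' x ω - Z' y ω) ^ 2 ∂P' = 2 * g' (x, y) := by
      have := hgv' x y; linarith
    simp only [key]
    rw [integral_xor_form P P' hum hvm u01 v01, hgx, hgx']
    ring
end

section
/- If g is an indicator variogram on X, then for every t > 0 and every ϖ ∈ [0,1], the function (x,y) ↦ (ϖ/4)·(1 − exp(−t·g(x,y))) is an indicator variogram on X. -/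
open MeasureTheory Real
open scoped ENNReal NNReal

namespace IndicatorVariogramAux


lemma measurable_sigmaMk' {β : ℕ → Type*} [m : ∀ n, MeasurableSpace (β n)] (n : ℕ) :
    Measurable (Sigma.mk n : β n → Σ k, β k) :=
  Measurable.of_le_map (iInf_le _ n)

lemma measurable_of_sigma {β : ℕ → Type*} [m : ∀ n, MeasurableSpace (β n)] {α : Type*}
    [MeasurableSpace α] {f : (Σ n, β n) → α} (hf : ∀ n, Measurable (fun ω => f ⟨n, ω⟩)) :
    Measurable f := by
  intro s hs
  have : MeasurableSet[⨅ n, (m n).map (Sigma.mk n)] (f ⁻¹' s) := by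
    rw [MeasurableSpace.measurableSet_iInf]
    exact fun n => hf n hs
  exact this

noncomputable def mixW (ϖ : ℝ) (r : ℝ≥0) (n : ℕ) : ℝ :=
  (if n = 0 then 1 - ϖ else 0) + ϖ * ProbabilityTheory.poissonPMFReal r n

lemma mixW_nonneg {ϖ : ℝ} (hϖ0 : 0 ≤ ϖ) (hϖ1 : ϖ ≤ 1) (r : ℝ≥0) (n : ℕ) :
    0 ≤ mixW ϖ r n := by
  unfold mixW
  have := ProbabilityTheory.poissonPMFReal_nonneg (r := r) (n := n)
  split_ifs <;> nlinarith

lemma mixW_hasSum (ϖ : ℝ) (r : ℝ≥0) : HasSum (mixW ϖ r) 1 := by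
  have h1 : HasSum (fun n : ℕ => if n = 0 then 1 - ϖ else 0) (1 - ϖ) := hasSum_ite_eq 0 (1 - ϖ)
  have h2 := (ProbabilityTheory.poissonPMFRealSum r).mul_left ϖ
  exact (by simpa using h1.add h2 : HasSum (fun n : ℕ => (if n = 0 then 1 - ϖ else 0)
    + ϖ * (Real.exp (-(r : ℝ)) * (r : ℝ) ^ n / (Nat.factorial n : ℝ))) 1)

variable {Ω : Type} [MeasurableSpace Ω]

/-- The mixture measure on `Σ n, Fin n → Ω`. -/
noncomputable def mixM (P : Measure Ω) (ϖ : ℝ) (r : ℝ≥0) : Measure (Σ n, Fin n → Ω) :=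
  Measure.sum fun n =>
    ENNReal.ofReal (mixW ϖ r n) • Measure.map (Sigma.mk n) (Measure.pi fun _ : Fin n => P)

lemma isProbability_mixM (P : Measure Ω) [IsProbabilityMeasure P] {ϖ : ℝ}
    (hϖ0 : 0 ≤ ϖ) (hϖ1 : ϖ ≤ 1) (r : ℝ≥0) : IsProbabilityMeasure (mixM P ϖ r) := by
  constructor
  have hsum : (mixM P ϖ r) Set.univ = ∑' n : ℕ, (ENNReal.ofReal (mixW ϖ r n) •
      Measure.map (Sigma.mk (β := fun k => Fin k → Ω) n)
        (Measure.pi fun _ : Fin n => P)) Set.univ :=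
    Measure.sum_apply _ MeasurableSet.univ
  rw [mixM] at hsum ⊢
  rw [hsum]
  have : ∀ n : ℕ, (ENNReal.ofReal (mixW ϖ r n) •
      Measure.map (Sigma.mk (β := fun k => Fin k → Ω) n) (Measure.pi fun _ : Fin n => P)) Set.univ
      = ENNReal.ofReal (mixW ϖ r n) := by
    intro n
    rw [Measure.smul_apply, Measure.map_apply (measurable_sigmaMk' n) MeasurableSet.univ]
    simp
  simp_rw [this]
  rw [← ENNReal.ofReal_tsum_of_nonneg (mixW_nonneg hϖ0 hϖ1 r) (mixW_hasSum ϖ r).summable,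
    (mixW_hasSum ϖ r).tsum_eq, ENNReal.ofReal_one]

lemma integral_mixM (P : Measure Ω) [IsProbabilityMeasure P] {ϖ : ℝ}
    (hϖ0 : 0 ≤ ϖ) (hϖ1 : ϖ ≤ 1) (r : ℝ≥0) {f : (Σ n, Fin n → Ω) → ℝ}
    (hf : Measurable f) (h01 : ∀ s, f s = 0 ∨ f s = 1) :
    ∫ s, f s ∂(mixM P ϖ r)
      = ∑' n : ℕ, mixW ϖ r n * ∫ ω, f ⟨n, ω⟩ ∂(Measure.pi fun _ : Fin n => P) := by
  have hf0 : ∀ s, 0 ≤ f s := fun s => by rcases h01 s with h | h <;> rw [h] <;> norm_num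
  have hf1 : ∀ s, f s ≤ 1 := fun s => by rcases h01 s with h | h <;> rw [h] <;> norm_num
  set Pn : ∀ n : ℕ, Measure (Fin n → Ω) := fun n => Measure.pi fun _ : Fin n => P with hPn
  have hint : ∀ n, Integrable (fun ω => f ⟨n, ω⟩) (Pn n) := by
    intro n
    refine Integrable.mono' (integrable_const 1)
      ((hf.comp (measurable_sigmaMk' n)).aestronglyMeasurable) (ae_of_all _ fun ω => ?_)
    rw [Real.norm_eq_abs, abs_of_nonneg (hf0 _)]
    exact hf1 _
  have hIn0 : ∀ n, 0 ≤ ∫ ω, f ⟨n, ω⟩ ∂(Pn n) := fun n => integral_nonneg fun ω => hf0 _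
  have hIn1 : ∀ n, ∫ ω, f ⟨n, ω⟩ ∂(Pn n) ≤ 1 := by
    intro n
    calc ∫ ω, f ⟨n, ω⟩ ∂(Pn n) ≤ ∫ _, (1 : ℝ) ∂(Pn n) :=
          integral_mono (hint n) (integrable_const 1) fun ω => hf1 _
      _ = 1 := by simp
  have hnn : ∀ n : ℕ, 0 ≤ mixW ϖ r n * ∫ ω, f ⟨n, ω⟩ ∂(Pn n) :=
    fun n => mul_nonneg (mixW_nonneg hϖ0 hϖ1 r n) (hIn0 n)
  have hsumm : Summable fun n : ℕ => mixW ϖ r n * ∫ ω, f ⟨n, ω⟩ ∂(Pn n) := by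
    refine Summable.of_nonneg_of_le hnn (fun n => ?_) (mixW_hasSum ϖ r).summable
    exact mul_le_of_le_one_right (mixW_nonneg hϖ0 hϖ1 r n) (hIn1 n)
  have h1 : (∫⁻ s, ENNReal.ofReal (f s) ∂(mixM P ϖ r))
      = ∑' n : ℕ, ENNReal.ofReal (mixW ϖ r n * ∫ ω, f ⟨n, ω⟩ ∂(Pn n)) := by
    rw [mixM, lintegral_sum_measure]
    refine tsum_congr fun n => ?_
    rw [lintegral_smul_measure,
      lintegral_map hf.ennreal_ofReal (measurable_sigmaMk' n),
      ← ofReal_integral_eq_lintegral_ofReal (hint n) (ae_of_all _ fun ω => hf0 _),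
      smul_eq_mul, ← ENNReal.ofReal_mul (mixW_nonneg hϖ0 hϖ1 r n)]
  rw [integral_eq_lintegral_of_nonneg_ae (ae_of_all _ hf0) hf.aestronglyMeasurable, h1,
    ← ENNReal.ofReal_tsum_of_nonneg hnn hsumm, ENNReal.toReal_ofReal (tsum_nonneg hnn)]

lemma prod_pm {ι : Type*} (s : Finset ι) (f : ι → ℝ) (h : ∀ i ∈ s, f i = 1 ∨ f i = -1) :
    s.prod f = 1 ∨ s.prod f = -1 := by
  classical
  induction s using Finset.induction_on with
  | empty => simp
  | @insert a s' hx ih =>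
    rw [Finset.prod_insert hx]
    rcases h a (Finset.mem_insert_self a s') with h1 | h1 <;>
      rcases ih (fun i hi => h i (Finset.mem_insert_of_mem hi)) with h2 | h2 <;>
        simp [h1, h2]

lemma integral_pi_prod (P : Measure Ω) [IsProbabilityMeasure P] (n : ℕ) {ξ : Ω → ℝ}
    (hξ : Measurable ξ) (hb : ∀ w, ξ w = 0 ∨ ξ w = 1) :
    ∫ ω : Fin n → Ω, (1 - ∏ i, (1 - 2 * ξ (ω i))) / 2 ∂(Measure.pi fun _ : Fin n => P)
      = (1 - (1 - 2 * ∫ w, ξ w ∂P) ^ n) / 2 := by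
  have hfac : ∀ w : Ω, (1 - 2 * ξ w) = 1 ∨ (1 - 2 * ξ w) = -1 := fun w => by
    rcases hb w with h | h <;> rw [h] <;> norm_num
  have hξint : Integrable ξ P := by
    refine Integrable.mono' (integrable_const 1) hξ.aestronglyMeasurable
      (ae_of_all _ fun w => ?_)
    rcases hb w with h | h <;> rw [h] <;> norm_num
  have hmeasF : Measurable fun ω : Fin n → Ω => ∏ i, (1 - 2 * ξ (ω i)) :=
    Finset.measurable_prod _ fun i _ =>
      measurable_const.sub ((hξ.comp (measurable_pi_apply i)).const_mul 2)
  have hFpm : ∀ ω : Fin n → Ω,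
      (∏ i, (1 - 2 * ξ (ω i))) = 1 ∨ (∏ i, (1 - 2 * ξ (ω i))) = -1 :=
    fun ω => prod_pm _ _ fun i _ => hfac (ω i)
  have hFint : Integrable (fun ω : Fin n → Ω => ∏ i, (1 - 2 * ξ (ω i)))
      (Measure.pi fun _ : Fin n => P) := by
    refine Integrable.mono' (integrable_const 1) hmeasF.aestronglyMeasurable
      (ae_of_all _ fun ω => ?_)
    rcases hFpm ω with h | h <;> rw [h] <;> norm_num
  have hsingle : ∫ w, (1 - 2 * ξ w) ∂P = 1 - 2 * ∫ w, ξ w ∂P := by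
    rw [integral_sub (integrable_const 1) (hξint.const_mul 2), integral_const,
      MeasureTheory.integral_const_mul]
    simp
  letI : MeasureSpace Ω := ⟨P⟩
  have hvol : (Measure.pi fun _ : Fin n => P) = (volume : Measure (Fin n → Ω)) := by
    rw [MeasureTheory.volume_pi]; rfl
  rw [hvol] at hFint ⊢
  rw [integral_div, integral_sub (integrable_const 1) hFint, integral_const]
  have hprod : ∫ ω : Fin n → Ω, ∏ i, (1 - 2 * ξ (ω i))
      = (∫ w, (1 - 2 * ξ w)) ^ n := by
    rw [← hvol, MeasureTheory.integral_fintype_prod_eq_pow (ι := Fin n) (fun w => 1 - 2 * ξ w)]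
    simp
    rfl
  rw [hprod]
  have : (volume : Measure Ω) = P := rfl
  rw [this, hsingle]
  simp

lemma tsum_mixW_geom (ϖ : ℝ) (r : ℝ≥0) (s : ℝ) :
    ∑' n : ℕ, mixW ϖ r n * ((1 - s ^ n) / 2)
      = (ϖ / 2) * (1 - Real.exp (r * (s - 1))) := by
  have hpois := ProbabilityTheory.poissonPMFRealSum r
  have hgeom : HasSum (fun n : ℕ => ProbabilityTheory.poissonPMFReal r n * s ^ n)
      (Real.exp (r * (s - 1))) := by
    have h := (NormedSpace.expSeries_div_hasSum_exp ((r : ℝ) * s)).mul_left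
      (Real.exp (-(r : ℝ)))
    have heq : (fun n : ℕ => Real.exp (-(r : ℝ)) * (((r : ℝ) * s) ^ n / (Nat.factorial n : ℝ)))
        = fun n : ℕ => ProbabilityTheory.poissonPMFReal r n * s ^ n := by
      funext n
      unfold ProbabilityTheory.poissonPMFReal
      rw [mul_pow]
      push_cast
      ring
    rw [heq] at h
    convert h using 1
    · rfl
    rw [← Real.exp_eq_exp_ℝ, ← Real.exp_add]
    ring_nf
  have h0 : HasSum (fun n : ℕ => (if n = 0 then 1 - ϖ else 0) * ((1 - s ^ n) / 2)) 0 := by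
    have : (fun n : ℕ => (if n = 0 then 1 - ϖ else 0) * ((1 - s ^ n) / 2))
        = fun _ => (0 : ℝ) := by
      funext n
      split_ifs with h
      · subst h; simp
      · simp
    rw [this]
    exact hasSum_zero
  have h2 : HasSum (fun n : ℕ => ϖ * ProbabilityTheory.poissonPMFReal r n * ((1 - s ^ n) / 2))
      ((ϖ / 2) * (1 - Real.exp (r * (s - 1)))) := by
    have h := (hpois.mul_left (ϖ / 2)).sub (hgeom.mul_left (ϖ / 2))
    convert h using 1
    · rfl
    · funext n; unfold ProbabilityTheory.poissonPMFReal; ring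
    · ring
  have htot := h0.add h2
  have : (fun n : ℕ => (if n = 0 then 1 - ϖ else 0) * ((1 - s ^ n) / 2)
      + ϖ * ProbabilityTheory.poissonPMFReal r n * ((1 - s ^ n) / 2))
      = fun n : ℕ => mixW ϖ r n * ((1 - s ^ n) / 2) := by
    funext n
    unfold mixW
    ring
  rw [this] at htot
  rw [htot.tsum_eq]
  ring


end IndicatorVariogramAux

open IndicatorVariogramAux

/-- If `g` is an indicator variogram on `X`, then for every `t > 0` and `ϖ ∈ [0,1]`,
so is `(ϖ/4)·(1 − exp(−t·g))`. -/
theorem indicatorVariogram_exp_transform (X : Type*) (g : X × X → ℝ)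
    (hg : IsIndicatorVariogram X g) (t : ℝ) (ht : 0 < t)
    (ϖ : ℝ) (hϖ : ϖ ∈ Set.Icc (0 : ℝ) 1) :
    IsIndicatorVariogram X (fun p => (ϖ / 4) * (1 - Real.exp (-t * g p))) := by
  obtain ⟨Ω, mΩ, P, hP, Z, hZm, hZ01, ⟨c, hc⟩, hgZ⟩ := hg
  obtain ⟨hϖ0, hϖ1⟩ := hϖ
  set r : ℝ≥0 := ⟨t / 4, by positivity⟩ with hrdef
  have hr4 : (r : ℝ) = t / 4 := rfl
  let W : X → (Σ n, Fin n → Ω) → ℝ :=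
    fun x s => (1 - ∏ i : Fin s.1, (1 - 2 * Z x (s.2 i))) / 2
  have hWm : ∀ x, Measurable (W x) := by
    intro x
    refine measurable_of_sigma fun n => ?_
    show Measurable fun ω : Fin n → Ω => (1 - ∏ i : Fin n, (1 - 2 * Z x (ω i))) / 2
    exact (measurable_const.sub (Finset.measurable_prod _ fun i _ =>
      measurable_const.sub (((hZm x).comp (measurable_pi_apply i)).const_mul 2))).div_const 2
  have hW01 : ∀ x s, W x s = 0 ∨ W x s = 1 := by
    intro x s
    rcases prod_pm Finset.univ (fun i : Fin s.1 => 1 - 2 * Z x (s.2 i))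
        (fun i _ => by rcases hZ01 x (s.2 i) with h | h <;> rw [h] <;> norm_num)
        with h | h
    · left; simp only [W]; rw [h]; norm_num
    · right; simp only [W]; rw [h]; norm_num
  refine ⟨(Σ n, Fin n → Ω), inferInstance, mixM P ϖ r, isProbability_mixM P hϖ0 hϖ1 r, W,
    hWm, hW01, ⟨(ϖ / 2) * (1 - Real.exp (r * ((1 - 2 * c) - 1))), fun x => ?_⟩,
    fun x y => ?_⟩
  · -- constant mean
    rw [integral_mixM P hϖ0 hϖ1 r (hWm x) (hW01 x)]
    have hIn : ∀ n : ℕ, ∫ ω, W x ⟨n, ω⟩ ∂(Measure.pi fun _ : Fin n => P)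
        = (1 - (1 - 2 * c) ^ n) / 2 := by
      intro n
      have := integral_pi_prod P n (hZm x) (hZ01 x)
      rw [hc x] at this
      exact this
    simp_rw [hIn]
    exact tsum_mixW_geom ϖ r (1 - 2 * c)
  · -- variogram identity
    have hgxy : ∫ w, (Z x w - Z y w) ^ 2 ∂P = 2 * g (x, y) := by
      have := hgZ x y
      linarith
    set ξ : Ω → ℝ := fun w => (Z x w - Z y w) ^ 2 with hξdef
    have hξm : Measurable ξ := ((hZm x).sub (hZm y)).pow_const 2
    have hξ01 : ∀ w, ξ w = 0 ∨ ξ w = 1 := by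
      intro w
      rcases hZ01 x w with h | h <;> rcases hZ01 y w with h' | h' <;>
        simp only [ξ] <;> rw [h, h'] <;> norm_num
    have hfm : Measurable fun s => (W x s - W y s) ^ 2 :=
      ((hWm x).sub (hWm y)).pow_const 2
    have hf01 : ∀ s, (W x s - W y s) ^ 2 = 0 ∨ (W x s - W y s) ^ 2 = 1 := by
      intro s
      rcases hW01 x s with h | h <;> rcases hW01 y s with h' | h' <;>
        rw [h, h'] <;> norm_num
    have hpt : ∀ (n : ℕ) (ω : Fin n → Ω),
        (W x ⟨n, ω⟩ - W y ⟨n, ω⟩) ^ 2 = (1 - ∏ i, (1 - 2 * ξ (ω i))) / 2 := by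
      intro n ω
      have hWx : W x ⟨n, ω⟩ = (1 - ∏ i : Fin n, (1 - 2 * Z x (ω i))) / 2 := rfl
      have hWy : W y ⟨n, ω⟩ = (1 - ∏ i : Fin n, (1 - 2 * Z y (ω i))) / 2 := rfl
      have hA2 : (∏ i : Fin n, (1 - 2 * Z x (ω i))) ^ 2 = 1 := by
        rw [← Finset.prod_pow]
        rw [Finset.prod_congr rfl fun i _ => show (1 - 2 * Z x (ω i)) ^ 2 = 1 by
          rcases hZ01 x (ω i) with h | h <;> rw [h] <;> norm_num]
        simp
      have hB2 : (∏ i : Fin n, (1 - 2 * Z y (ω i))) ^ 2 = 1 := by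
        rw [← Finset.prod_pow]
        rw [Finset.prod_congr rfl fun i _ => show (1 - 2 * Z y (ω i)) ^ 2 = 1 by
          rcases hZ01 y (ω i) with h | h <;> rw [h] <;> norm_num]
        simp
      have hAB : (∏ i : Fin n, (1 - 2 * Z x (ω i))) * (∏ i : Fin n, (1 - 2 * Z y (ω i)))
          = ∏ i, (1 - 2 * ξ (ω i)) := by
        rw [← Finset.prod_mul_distrib]
        refine Finset.prod_congr rfl fun i _ => ?_
        simp only [ξ]
        rcases hZ01 x (ω i) with h | h <;> rcases hZ01 y (ω i) with h' | h' <;>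
          rw [h, h'] <;> norm_num
      rw [hWx, hWy, ← hAB]
      linear_combination hA2 / 4 + hB2 / 4
    show (ϖ / 4) * (1 - Real.exp (-t * g (x, y)))
        = (1 / 2) * ∫ s, (W x s - W y s) ^ 2 ∂(mixM P ϖ r)
    rw [integral_mixM P hϖ0 hϖ1 r hfm hf01]
    simp_rw [hpt]
    have hIn : ∀ n : ℕ, ∫ ω : Fin n → Ω, (1 - ∏ i, (1 - 2 * ξ (ω i))) / 2
        ∂(Measure.pi fun _ : Fin n => P)
        = (1 - (1 - 2 * (2 * g (x, y))) ^ n) / 2 := by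
      intro n
      have := integral_pi_prod P n hξm hξ01
      rw [hξdef] at this ⊢
      rw [this, hgxy]
    simp_rw [hIn]
    rw [tsum_mixW_geom ϖ r (1 - 2 * (2 * g (x, y)))]
    have hexp : (r : ℝ) * ((1 - 2 * (2 * g (x, y))) - 1) = -t * g (x, y) := by
      rw [hr4]; ring
    rw [hexp]
    ring
end

section
/- Let g be an indicator variogram on X. Then g satisfies the gap inequalities: for every positive integer n, all points x₁,…,xₙ ∈ X and all integers λ₁,…,λₙ ∈ ℤ, one has ∑ₖ∑ₗ λₖ λₗ g(xₖ,xₗ) ≤ (1/4)·(σ(λ)² − γ(λ)²), where σ(λ) = ∑ₖ λₖ and γ(λ) = min { |∑ₖ λₖ zₖ| : z ∈ {−1,1}ⁿ }. -/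
open MeasureTheory Real

/-- Every indicator variogram satisfies the gap inequalities: for integers `λ₁,…,λₙ`,
`∑ₖ∑ₗ λₖ λₗ g(xₖ,xₗ) ≤ (1/4)·(σ(λ)² − γ(λ)²)`, where `σ(λ) = ∑ₖ λₖ` and
`γ(λ) = min {|∑ₖ λₖ zₖ| : z ∈ {−1,1}ⁿ}`. -/
theorem indicatorVariogram_gap_inequalities (X : Type*) (g : X × X → ℝ)
    (hg : IsIndicatorVariogram X g)
    (n : ℕ) (hn : 0 < n) (x : Fin n → X) (lam : Fin n → ℤ) :
    ∑ k, ∑ l, ((lam k : ℝ) * (lam l : ℝ)) * g (x k, x l) ≤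
      (1 / 4) * (((∑ k, lam k : ℤ) : ℝ) ^ 2 -
        (sInf {v : ℝ | ∃ z : Fin n → ℝ, (∀ k, z k = 1 ∨ z k = -1) ∧
          v = |∑ k, (lam k : ℝ) * z k|}) ^ 2) := by
  obtain ⟨Ω, mΩ, P, hP, Z, hmeas, h01, -, hgdef⟩ := hg
  set S : ℝ := ∑ k, (lam k : ℝ) with hS
  set w : Ω → ℝ := fun ω => ∑ k, (lam k : ℝ) * Z (x k) ω with hw
  set sγ : Set ℝ := {v : ℝ | ∃ z : Fin n → ℝ, (∀ k, z k = 1 ∨ z k = -1) ∧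
      v = |∑ k, (lam k : ℝ) * z k|} with hsγ
  set γ : ℝ := sInf sγ with hγ
  -- basic facts about the set
  have hbdd : BddBelow sγ := ⟨0, fun v hv => by
    obtain ⟨z, hz, rfl⟩ := hv; exact abs_nonneg _⟩
  have hne : sγ.Nonempty := ⟨|∑ k, (lam k : ℝ) * (1:ℝ)|, fun _ => 1, fun k => Or.inl rfl, rfl⟩
  have hγ0 : 0 ≤ γ := le_csInf hne (fun v hv => by
    obtain ⟨z, hz, rfl⟩ := hv; exact abs_nonneg _)
  -- integrability
  have hint : ∀ a b : X, Integrable (fun ω => (Z a ω - Z b ω) ^ 2) P := by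
    intro a b
    apply (integrable_const (1:ℝ)).mono'
      (((hmeas a).sub (hmeas b)).pow_const 2).aestronglyMeasurable
    filter_upwards with ω
    rcases h01 a ω with h | h <;> rcases h01 b ω with h' | h' <;> rw [Pi.sub_apply, h, h'] <;> norm_num
  have hint' : ∀ k l : Fin n, Integrable
      (fun ω => (lam k : ℝ) * (lam l : ℝ) * ((1/2) * (Z (x k) ω - Z (x l) ω) ^ 2)) P :=
    fun k l => ((hint (x k) (x l)).const_mul _).const_mul _
  -- rewrite LHS as a single integral
  have LHSeq : ∑ k, ∑ l, ((lam k : ℝ) * (lam l : ℝ)) * g (x k, x l)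
      = ∫ ω, (∑ k, ∑ l, (lam k : ℝ) * (lam l : ℝ)
          * ((1/2) * (Z (x k) ω - Z (x l) ω) ^ 2)) ∂P := by
    rw [integral_finset_sum _ (fun k _ => integrable_finset_sum _ (fun l _ => hint' k l))]
    refine Finset.sum_congr rfl fun k _ => ?_
    rw [integral_finset_sum _ (fun l _ => hint' k l)]
    refine Finset.sum_congr rfl fun l _ => ?_
    rw [hgdef, integral_const_mul, integral_const_mul]
  -- pointwise algebraic identity
  have key : ∀ ω, (∑ k, ∑ l, (lam k : ℝ) * (lam l : ℝ)
      * ((1/2) * (Z (x k) ω - Z (x l) ω) ^ 2)) = S * w ω - w ω ^ 2 := by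
    intro ω
    have hsq : ∀ k : Fin n, Z (x k) ω * Z (x k) ω = Z (x k) ω := fun k => by
      rcases h01 (x k) ω with h | h <;> rw [h] <;> ring
    have e : S * w ω - w ω ^ 2
        = (1/2) * ((∑ k, (lam k : ℝ) * Z (x k) ω) * ∑ l, (lam l : ℝ))
          + (1/2) * ((∑ k, (lam k : ℝ)) * ∑ l, (lam l : ℝ) * Z (x l) ω)
          - (∑ k, (lam k : ℝ) * Z (x k) ω) * ∑ l, (lam l : ℝ) * Z (x l) ω := by
      simp only [hS, hw]; ring
    rw [e, Finset.sum_mul_sum, Finset.sum_mul_sum, Finset.sum_mul_sum,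
      Finset.mul_sum, Finset.mul_sum]
    simp only [← Finset.sum_add_distrib, ← Finset.sum_sub_distrib, Finset.mul_sum]
    refine Finset.sum_congr rfl fun k _ => Finset.sum_congr rfl fun l _ => ?_
    rw [show (Z (x k) ω - Z (x l) ω) ^ 2
        = Z (x k) ω * Z (x k) ω - 2 * (Z (x k) ω * Z (x l) ω) + Z (x l) ω * Z (x l) ω
      from by ring, hsq k, hsq l]
    ring
  -- pointwise bound
  have hpt : ∀ ω, (∑ k, ∑ l, (lam k : ℝ) * (lam l : ℝ)
      * ((1/2) * (Z (x k) ω - Z (x l) ω) ^ 2)) ≤ (1/4) * (S ^ 2 - γ ^ 2) := by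
    intro ω
    rw [key ω]
    have hmem : |2 * w ω - S| ∈ sγ := by
      refine ⟨fun k => 2 * Z (x k) ω - 1, fun k => ?_, ?_⟩
      · rcases h01 (x k) ω with h | h <;> simp only [h] <;> norm_num
      · congr 1
        rw [hw, hS, Finset.mul_sum, ← Finset.sum_sub_distrib]
        exact Finset.sum_congr rfl fun k _ => by ring
    have hγle : γ ≤ |2 * w ω - S| := csInf_le hbdd hmem
    have hsq : γ ^ 2 ≤ (2 * w ω - S) ^ 2 := by
      rw [← sq_abs (2 * w ω - S)]
      exact pow_le_pow_left₀ hγ0 hγle 2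
    nlinarith [hsq]
  -- conclude
  have hSeq : ((∑ k, lam k : ℤ) : ℝ) = S := by rw [hS]; push_cast; rfl
  rw [LHSeq, hSeq]
  calc ∫ ω, (∑ k, ∑ l, (lam k : ℝ) * (lam l : ℝ)
        * ((1/2) * (Z (x k) ω - Z (x l) ω) ^ 2)) ∂P
      ≤ ∫ _, (1/4) * (S ^ 2 - γ ^ 2) ∂P := by
        exact integral_mono (integrable_finset_sum _
          (fun k _ => integrable_finset_sum _ (fun l _ => hint' k l)))
          (integrable_const _) hpt
    _ = (1/4) * (S ^ 2 - γ ^ 2) := by simp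
end

section
/- Let g be an indicator variogram on X. Then g satisfies the hypermetric inequalities: for every positive integer n, all points x₁,…,xₙ ∈ X and all integers λ₁,…,λₙ ∈ ℤ with ∑ₖ λₖ = 1, one has ∑ₖ∑ₗ λₖ λₗ g(xₖ,xₗ) ≤ 0. -/
open MeasureTheory Real

lemma int_cast_sub_sq_nonpos (m : ℤ) : (m : ℝ) - (m : ℝ) ^ 2 ≤ 0 := by
  have h : m ≤ m ^ 2 := by
    rcases le_or_gt m 0 with h | h
    · nlinarith [sq_nonneg m]
    · nlinarith
  have : (m : ℝ) ≤ (m : ℝ) ^ 2 := by exact_mod_cast h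
  linarith

/-- Every indicator variogram satisfies the hypermetric inequalities: for all integers
`λ₁,…,λₙ` with `∑ₖ λₖ = 1`, `∑ₖ∑ₗ λₖ λₗ g(xₖ,xₗ) ≤ 0`. -/
theorem indicatorVariogram_hypermetric (X : Type*) (g : X × X → ℝ)
    (hg : IsIndicatorVariogram X g)
    (n : ℕ) (hn : 0 < n) (x : Fin n → X) (lam : Fin n → ℤ)
    (hsum : ∑ k, lam k = 1) :
    ∑ k, ∑ l, ((lam k : ℝ) * (lam l : ℝ)) * g (x k, x l) ≤ 0 := by
  obtain ⟨Ω, mΩ, P, hP, Z, hZm, hZ01, ⟨c, hZc⟩, hgZ⟩ := hg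
  -- integrability of each squared difference
  have hint : ∀ k l : Fin n,
      Integrable (fun ω => (Z (x k) ω - Z (x l) ω) ^ 2) P := by
    intro k l
    refine Integrable.mono' (integrable_const (1 : ℝ))
      (((hZm (x k)).sub (hZm (x l))).pow_const 2).aestronglyMeasurable
      (ae_of_all _ fun ω => ?_)
    rcases hZ01 (x k) ω with h1 | h1 <;> rcases hZ01 (x l) ω with h2 | h2 <;>
      simp [h1, h2] <;> norm_num
  -- rewrite the double sum as a single integral
  have hrw : ∑ k, ∑ l, ((lam k : ℝ) * (lam l : ℝ)) * g (x k, x l)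
      = ∫ ω, ∑ k, ∑ l, ((lam k : ℝ) * (lam l : ℝ)) *
          ((1 / 2) * (Z (x k) ω - Z (x l) ω) ^ 2) ∂P := by
    rw [integral_finset_sum]
    · refine Finset.sum_congr rfl fun k _ => ?_
      rw [integral_finset_sum]
      · refine Finset.sum_congr rfl fun l _ => ?_
        rw [hgZ]
        rw [show (fun ω => ((lam k : ℝ) * (lam l : ℝ)) *
            ((1 / 2) * (Z (x k) ω - Z (x l) ω) ^ 2))
          = fun ω => ((lam k : ℝ) * (lam l : ℝ) * (1 / 2)) *
            ((Z (x k) ω - Z (x l) ω) ^ 2) by funext ω; ring]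
        rw [integral_const_mul]
        ring
      · intro l _
        exact ((hint k l).const_mul ((lam k : ℝ) * (lam l : ℝ) * (1 / 2))).congr
          (ae_of_all _ fun ω => by ring)
    · intro k _
      apply integrable_finset_sum
      intro l _
      exact ((hint k l).const_mul ((lam k : ℝ) * (lam l : ℝ) * (1 / 2))).congr
        (ae_of_all _ fun ω => by ring)
  rw [hrw]
  -- pointwise the integrand is ≤ 0
  have hpt : ∀ ω, (∑ k, ∑ l, ((lam k : ℝ) * (lam l : ℝ)) *
      ((1 / 2) * (Z (x k) ω - Z (x l) ω) ^ 2)) ≤ 0 := by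
    intro ω
    set a : Fin n → ℝ := fun k => Z (x k) ω with ha
    have hsq : ∀ k, a k ^ 2 = a k := by
      intro k; rcases hZ01 (x k) ω with h | h <;> simp [ha, h]
    set S : ℝ := ∑ k, (lam k : ℝ) * a k with hS
    have hT : (∑ k, (lam k : ℝ)) = 1 := by
      rw [← Int.cast_sum, hsum, Int.cast_one]
    have hiden : (∑ k, ∑ l, ((lam k : ℝ) * (lam l : ℝ)) *
        ((1 / 2) * (a k - a l) ^ 2)) = S - S ^ 2 := by
      have step : ∀ k l : Fin n, ((lam k : ℝ) * (lam l : ℝ)) *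
          ((1 / 2) * (a k - a l) ^ 2)
          = (1 / 2) * (((lam k : ℝ) * a k) * (lam l : ℝ))
            + (1 / 2) * ((lam k : ℝ) * ((lam l : ℝ) * a l))
            - ((lam k : ℝ) * a k) * ((lam l : ℝ) * a l) := by
        intro k l
        have h1 := hsq k
        have h2 := hsq l
        linear_combination ((lam k : ℝ) * (lam l : ℝ) / 2) * h1 + ((lam k : ℝ) * (lam l : ℝ) / 2) * h2
      calc (∑ k, ∑ l, ((lam k : ℝ) * (lam l : ℝ)) * ((1 / 2) * (a k - a l) ^ 2))
          = ∑ k, ∑ l, ((1 / 2) * (((lam k : ℝ) * a k) * (lam l : ℝ))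
            + (1 / 2) * ((lam k : ℝ) * ((lam l : ℝ) * a l))
            - ((lam k : ℝ) * a k) * ((lam l : ℝ) * a l)) := by
            exact Finset.sum_congr rfl fun k _ => Finset.sum_congr rfl fun l _ => step k l
        _ = S - S ^ 2 := by
            simp only [Finset.sum_sub_distrib, Finset.sum_add_distrib,
              ← Finset.mul_sum, ← Finset.sum_mul]
            rw [← hS, hT]; ring
    rw [show (∑ k, ∑ l, ((lam k : ℝ) * (lam l : ℝ)) *
        ((1 / 2) * (Z (x k) ω - Z (x l) ω) ^ 2))
      = (∑ k, ∑ l, ((lam k : ℝ) * (lam l : ℝ)) * ((1 / 2) * (a k - a l) ^ 2)) from rfl,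
      hiden]
    -- S is an integer
    set b : Fin n → ℤ := fun k => if a k = 1 then 1 else 0 with hb
    have hab : ∀ k, a k = ((b k : ℤ) : ℝ) := by
      intro k
      rcases hZ01 (x k) ω with h | h <;> simp [hb, ha, h] at * <;> simp [h]
    have hSm : S = ((∑ k, lam k * b k : ℤ) : ℝ) := by
      rw [hS]
      push_cast
      exact Finset.sum_congr rfl fun k _ => by rw [hab k]
    rw [hSm]
    exact int_cast_sub_sq_nonpos _
  exact integral_nonpos fun ω => hpt ω
end

section
/- Let g be an indicator variogram on X. Then g satisfies the corner-positive inequalities: for every integer n ≥ 2, all points x₁,…,xₙ ∈ X and every real n × n matrix (λ_{kℓ}) that is corner-positive (i.e., ∑ₖ∑ₗ εₖ εₗ λ_{kℓ} ≥ 0 for every ε ∈ {−1,1}ⁿ), one has ∑ₖ∑ₗ λ_{kℓ}·(1 − 4·g(xₖ,xₗ)) ≥ 0. -/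
open MeasureTheory Real

/-- Every indicator variogram satisfies the corner-positive inequalities: for every
`n ≥ 2`, points `x₁,…,xₙ` and corner-positive matrix `(Λ k l)` (that is,
`∑ₖ∑ₗ εₖ εₗ Λ k l ≥ 0` for all `ε ∈ {−1,1}ⁿ`), one has
`∑ₖ∑ₗ Λ k l (1 − 4 g(xₖ,xₗ)) ≥ 0`. -/
theorem indicatorVariogram_corner_positive (X : Type*) (g : X × X → ℝ)
    (hg : IsIndicatorVariogram X g)
    (n : ℕ) (hn : 2 ≤ n) (x : Fin n → X) (Λ : Fin n → Fin n → ℝ)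
    (hΛ : ∀ ε : Fin n → ℝ, (∀ k, ε k = 1 ∨ ε k = -1) →
      0 ≤ ∑ k, ∑ l, ε k * ε l * Λ k l) :
    0 ≤ ∑ k, ∑ l, Λ k l * (1 - 4 * g (x k, x l)) := by
  obtain ⟨Ω, mΩ, P, hP, Z, hZm, hZ01, ⟨c, hc⟩, hgZ⟩ := hg
  -- integrability of (Z - Z)^2
  have hint : ∀ k l : Fin n, Integrable (fun ω => (Z (x k) ω - Z (x l) ω) ^ 2) P := by
    intro k l
    apply Integrable.mono' (integrable_const (1 : ℝ))
    · exact (((hZm _).sub (hZm _)).pow_const 2).aestronglyMeasurable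
    · filter_upwards with ω
      rcases hZ01 (x k) ω with h1 | h1 <;> rcases hZ01 (x l) ω with h2 | h2 <;>
        rw [h1, h2] <;> norm_num
  -- pointwise identity between the "sign" product and 1 - 2 d²
  have hσd : ∀ (k l : Fin n) (ω : Ω),
      (2 * Z (x k) ω - 1) * (2 * Z (x l) ω - 1)
        = 1 - 2 * (Z (x k) ω - Z (x l) ω) ^ 2 := by
    intro k l ω
    rcases hZ01 (x k) ω with h1 | h1 <;> rcases hZ01 (x l) ω with h2 | h2 <;>
      rw [h1, h2] <;> ring
  have hintσ : ∀ k l : Fin n,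
      Integrable (fun ω => (2 * Z (x k) ω - 1) * (2 * Z (x l) ω - 1)) P := by
    intro k l
    have : (fun ω => (2 * Z (x k) ω - 1) * (2 * Z (x l) ω - 1))
        = fun ω => 1 - 2 * (Z (x k) ω - Z (x l) ω) ^ 2 := funext fun ω => hσd k l ω
    rw [this]
    exact (integrable_const (1 : ℝ)).sub ((hint k l).const_mul 2)
  have key : ∀ k l : Fin n, (1 : ℝ) - 4 * g (x k, x l)
      = ∫ ω, (2 * Z (x k) ω - 1) * (2 * Z (x l) ω - 1) ∂P := by
    intro k l
    have : (fun ω => (2 * Z (x k) ω - 1) * (2 * Z (x l) ω - 1))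
        = fun ω => 1 - 2 * (Z (x k) ω - Z (x l) ω) ^ 2 := funext fun ω => hσd k l ω
    rw [this, hgZ, integral_sub (integrable_const (1 : ℝ)) ((hint k l).const_mul 2),
      integral_const, integral_const_mul]
    simp [hP.measure_univ]
    ring
  -- pointwise nonnegativity
  have hF : ∀ ω : Ω,
      0 ≤ ∑ k, ∑ l, Λ k l * ((2 * Z (x k) ω - 1) * (2 * Z (x l) ω - 1)) := by
    intro ω
    have hε : ∀ k : Fin n, (2 * Z (x k) ω - 1) = 1 ∨ (2 * Z (x k) ω - 1) = -1 := by
      intro k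
      rcases hZ01 (x k) ω with h | h <;> rw [h] <;> norm_num
    calc (0 : ℝ)
        ≤ ∑ k, ∑ l, (2 * Z (x k) ω - 1) * (2 * Z (x l) ω - 1) * Λ k l :=
          hΛ (fun k => 2 * Z (x k) ω - 1) hε
      _ = ∑ k, ∑ l, Λ k l * ((2 * Z (x k) ω - 1) * (2 * Z (x l) ω - 1)) := by
          refine Finset.sum_congr rfl fun k _ => Finset.sum_congr rfl fun l _ => by ring
  calc (0 : ℝ)
      ≤ ∫ ω, ∑ k, ∑ l, Λ k l * ((2 * Z (x k) ω - 1) * (2 * Z (x l) ω - 1)) ∂P :=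
        integral_nonneg hF
    _ = ∑ k, ∑ l, Λ k l * (1 - 4 * g (x k, x l)) := by
        rw [integral_finset_sum _ fun k _ =>
          integrable_finset_sum _ fun l _ => (hintσ k l).const_mul (Λ k l)]
        refine Finset.sum_congr rfl fun k _ => ?_
        rw [integral_finset_sum _ fun l _ => (hintσ k l).const_mul (Λ k l)]
        refine Finset.sum_congr rfl fun l _ => ?_
        rw [integral_const_mul, key k l]
end

section
/- A function γ¹ : X × X → ℝ is the madogram of a family Z : X → Ω → ℝ of random variables taking values in [0,1] and having a stationary marginal distribution if and only if γ¹ is an indicator variogram on X. -/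
open MeasureTheory Real

section MadogramAux

lemma madogram_aux_int_iio (a : ℝ) (ha : a ∈ Set.Icc (0:ℝ) 1) :
    ∫ u in Set.Icc (0:ℝ) 1, (if u < a then (1:ℝ) else 0) = a := by
  have h1 : (fun u : ℝ => if u < a then (1:ℝ) else 0)
      = Set.indicator (Set.Iio a) (fun _ => (1:ℝ)) := by
    funext u; by_cases h : u < a <;> simp [Set.indicator, Set.mem_Iio, h]
  rw [h1, integral_indicator measurableSet_Iio,
    Measure.restrict_restrict measurableSet_Iio]
  have h2 : Set.Iio a ∩ Set.Icc (0:ℝ) 1 = Set.Ico 0 a := by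
    ext u
    simp only [Set.mem_inter_iff, Set.mem_Iio, Set.mem_Icc, Set.mem_Ico]
    constructor
    · rintro ⟨h, h0, h1'⟩; exact ⟨h0, h⟩
    · rintro ⟨h0, h⟩; exact ⟨h, h0, le_trans h.le ha.2⟩
  rw [h2]
  simp [Real.volume_Ico, ENNReal.toReal_ofReal ha.1, ha.1]

lemma madogram_aux_int_ico (a b : ℝ) (ha : a ∈ Set.Icc (0:ℝ) 1)
    (hb : b ∈ Set.Icc (0:ℝ) 1) (hab : a ≤ b) :
    ∫ u in Set.Icc (0:ℝ) 1, |(if u < a then (1:ℝ) else 0) - (if u < b then 1 else 0)| = b - a := by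
  have h1 : (fun u : ℝ => |(if u < a then (1:ℝ) else 0) - (if u < b then 1 else 0)|)
      = Set.indicator (Set.Ico a b) (fun _ => (1:ℝ)) := by
    funext u
    by_cases h1 : u < a
    · have h2 : u < b := lt_of_lt_of_le h1 hab
      simp [Set.indicator, Set.mem_Ico, h1, h2, not_le.2 h1]
    · by_cases h2 : u < b
      · simp [Set.indicator, Set.mem_Ico, h1, h2, not_lt.1 h1]
      · simp [Set.indicator, Set.mem_Ico, h1, h2]
  rw [h1, integral_indicator measurableSet_Ico,
    Measure.restrict_restrict measurableSet_Ico]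
  have h2 : Set.Ico a b ∩ Set.Icc (0:ℝ) 1 = Set.Ico a b :=
    Set.inter_eq_left.2 fun u hu => ⟨le_trans ha.1 hu.1, le_trans hu.2.le hb.2⟩
  rw [h2]
  simp [Real.volume_Ico, ENNReal.toReal_ofReal (sub_nonneg.2 hab), hab]

lemma madogram_aux_int_abs (a b : ℝ) (ha : a ∈ Set.Icc (0:ℝ) 1) (hb : b ∈ Set.Icc (0:ℝ) 1) :
    ∫ u in Set.Icc (0:ℝ) 1, |(if u < a then (1:ℝ) else 0) - (if u < b then 1 else 0)|
      = |a - b| := by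
  rcases le_total a b with h | h
  · rw [madogram_aux_int_ico a b ha hb h, abs_sub_comm, abs_of_nonneg (sub_nonneg.2 h)]
  · have heq : ∀ u : ℝ, |(if u < a then (1:ℝ) else 0) - (if u < b then 1 else 0)|
        = |(if u < b then (1:ℝ) else 0) - (if u < a then 1 else 0)| := fun u => abs_sub_comm _ _
    simp_rw [heq]
    rw [madogram_aux_int_ico b a hb ha h, abs_of_nonneg (sub_nonneg.2 h)]

end MadogramAux

/-- `γ1` is the madogram of a family of random variables with values in `[0,1]` and
stationary marginal distribution iff `γ1` is an indicator variogram on `X`. -/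
theorem madogram_of_unit_interval_stationary_iff_indicatorVariogram
    (X : Type*) (γ1 : X × X → ℝ) :
    (∃ (Ω : Type) (_ : MeasurableSpace Ω) (P : Measure Ω),
      IsProbabilityMeasure P ∧
      ∃ Z : X → Ω → ℝ,
        (∀ x, Measurable (Z x)) ∧
        (∀ x ω, Z x ω ∈ Set.Icc (0 : ℝ) 1) ∧
        (∀ x y : X, Measure.map (Z x) P = Measure.map (Z y) P) ∧
        (∀ x y : X, γ1 (x, y) = (1 / 2) * ∫ ω, |Z x ω - Z y ω| ∂P)) ↔
    IsIndicatorVariogram X γ1 := by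
  constructor
  · -- forward: madogram of [0,1]-valued stationary family ⇒ indicator variogram
    rintro ⟨Ω, mΩ, P, hP, Z, hmeas, hrange, hstat, hmado⟩
    -- the uniform measure on [0,1]
    set ν : Measure ℝ := (volume : Measure ℝ).restrict (Set.Icc 0 1) with hν
    have hνP : IsProbabilityMeasure ν := by constructor; simp [hν, Real.volume_Icc]
    set P' : Measure (Ω × ℝ) := P.prod ν with hP'
    have hP'P : IsProbabilityMeasure P' := by rw [hP']; infer_instance
    -- the indicator family
    set W : X → Ω × ℝ → ℝ := fun x p => if p.2 < Z x p.1 then 1 else 0 with hW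
    have hWmeas : ∀ x, Measurable (W x) := fun x =>
      Measurable.ite (measurableSet_lt measurable_snd ((hmeas x).comp measurable_fst))
        measurable_const measurable_const
    have hW01 : ∀ x p, W x p = 0 ∨ W x p = 1 := by
      intro x p
      by_cases h : p.2 < Z x p.1 <;> simp [hW, h]
    -- integrability helper
    have hint : ∀ f : Ω × ℝ → ℝ, Measurable f → (∀ p, |f p| ≤ 1) → Integrable f P' :=
      fun f hm hb => (integrable_const (1:ℝ)).mono' hm.aestronglyMeasurable
        (Filter.Eventually.of_forall hb)
    -- mean of W x equals mean of Z x
    have hmean : ∀ x, ∫ p, W x p ∂P' = ∫ ω, Z x ω ∂P := by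
      intro x
      have hi : Integrable (fun p : Ω × ℝ => W x p) P' := by
        apply hint _ (hWmeas x)
        intro p; rcases hW01 x p with h | h <;> rw [h] <;> norm_num
      rw [hP', integral_prod _ hi]
      apply integral_congr_ae
      filter_upwards with ω
      exact madogram_aux_int_iio (Z x ω) (hrange x ω)
    -- means of Z are all equal by stationarity
    have hZmean : ∀ x y : X, ∫ ω, Z x ω ∂P = ∫ ω, Z y ω ∂P := by
      intro x y
      have h1 : ∫ ω, Z x ω ∂P = ∫ t, t ∂(Measure.map (Z x) P) :=
        (integral_map (hmeas x).aemeasurable aestronglyMeasurable_id).symm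
      have h2 : ∫ ω, Z y ω ∂P = ∫ t, t ∂(Measure.map (Z y) P) :=
        (integral_map (hmeas y).aemeasurable aestronglyMeasurable_id).symm
      rw [h1, h2, hstat x y]
    refine ⟨Ω × ℝ, inferInstance, P', hP'P, W, hWmeas, hW01, ?_, ?_⟩
    · -- constant mean
      by_cases hX : Nonempty X
      · refine ⟨∫ ω, Z hX.some ω ∂P, fun x => ?_⟩
        rw [hmean x, hZmean x hX.some]
      · exact ⟨0, fun x => absurd ⟨x⟩ hX⟩
    · -- the variogram formula
      intro x y
      rw [hmado x y]
      congr 1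
      have hi : Integrable (fun p : Ω × ℝ => (W x p - W y p) ^ 2) P' := by
        apply hint _ (((hWmeas x).sub (hWmeas y)).pow_const 2)
        intro p
        rcases hW01 x p with h1 | h1 <;> rcases hW01 y p with h2 | h2 <;>
          rw [Pi.sub_apply, h1, h2] <;> norm_num
      rw [hP', integral_prod _ hi]
      apply integral_congr_ae
      filter_upwards with ω
      have hsq : ∀ u : ℝ, (W x (ω, u) - W y (ω, u)) ^ 2
          = |(if u < Z x ω then (1:ℝ) else 0) - (if u < Z y ω then 1 else 0)| := by
        intro u
        simp only [hW]
        by_cases h1 : u < Z x ω <;> by_cases h2 : u < Z y ω <;> simp [h1, h2]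
      simp_rw [hsq]
      exact (madogram_aux_int_abs (Z x ω) (Z y ω) (hrange x ω) (hrange y ω)).symm
  · -- backward: indicator variogram ⇒ madogram of [0,1]-valued stationary family
    rintro ⟨Ω, mΩ, P, hP, Z, hmeas, h01, ⟨c, hc⟩, hvar⟩
    classical
    -- the set where Z x = 1
    set A : X → Set Ω := fun x => Z x ⁻¹' {1} with hA
    have hAmeas : ∀ x, MeasurableSet (A x) := fun x => (hmeas x) (measurableSet_singleton 1)
    -- Z x is the indicator of A x
    have hZind : ∀ x, Z x = Set.indicator (A x) (fun _ => (1:ℝ)) := by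
      intro x; funext ω
      by_cases h : ω ∈ A x
      · simp only [Set.indicator_of_mem h]
        exact h
      · simp only [Set.indicator_of_notMem h]
        rcases h01 x ω with h' | h'
        · exact h'
        · exact absurd h' h
    have hPA : ∀ x, P (A x) = ENNReal.ofReal c := by
      intro x
      have h1 : ∫ ω, Z x ω ∂P = (P (A x)).toReal := by
        conv_lhs => rw [hZind x]
        rw [integral_indicator_const (1:ℝ) (hAmeas x)]
        simp [measureReal_def]
      rw [← hc x, h1, ENNReal.ofReal_toReal (measure_ne_top P (A x))]
    refine ⟨Ω, mΩ, P, hP, Z, hmeas, ?_, ?_, ?_⟩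
    · intro x ω
      rcases h01 x ω with h | h <;> rw [h] <;> norm_num
    · -- stationarity
      intro x y
      ext s hs
      rw [Measure.map_apply (hmeas x) hs, Measure.map_apply (hmeas y) hs]
      have hpre : ∀ z : X, Z z ⁻¹' s =
          (if (0:ℝ) ∈ s then (A z)ᶜ else ∅) ∪ (if (1:ℝ) ∈ s then A z else ∅) := by
        intro z
        ext ω
        rcases h01 z ω with h | h
        · have hω : ω ∉ A z := by simp [hA, h]
          by_cases h0 : (0:ℝ) ∈ s <;>
            simp [Set.mem_preimage, h, h0, hω]
        · have hω : ω ∈ A z := by simp [hA, h]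
          by_cases h1 : (1:ℝ) ∈ s <;> by_cases h0 : (0:ℝ) ∈ s <;>
            simp [Set.mem_preimage, h, h0, h1, hω]
      rw [hpre x, hpre y]
      by_cases h0 : (0:ℝ) ∈ s <;> by_cases h1 : (1:ℝ) ∈ s <;>
        simp only [h0, h1, if_true, if_false, Set.union_empty, Set.empty_union]
      · rw [measure_union (by simp [Set.disjoint_left]) (hAmeas x),
          measure_union (by simp [Set.disjoint_left]) (hAmeas y),
          hPA x, hPA y, measure_compl (hAmeas x) (measure_ne_top _ _),
          measure_compl (hAmeas y) (measure_ne_top _ _), hPA x, hPA y]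
      · rw [measure_compl (hAmeas x) (measure_ne_top _ _),
          measure_compl (hAmeas y) (measure_ne_top _ _), hPA x, hPA y]
      · rw [hPA x, hPA y]
    · -- madogram formula
      intro x y
      rw [hvar x y]
      congr 1
      apply integral_congr_ae
      filter_upwards with ω
      rcases h01 x ω with h1 | h1 <;> rcases h01 y ω with h2 | h2 <;>
        rw [h1, h2] <;> norm_num
end

section
/- Let γ¹ be the madogram of a family Z : X → Ω → ℝ of random variables. Then for every positive integer n and all points x₁,…,xₙ ∈ X: (i) γ¹ satisfies the negative-type inequalities: for all reals λ₁,…,λₙ with ∑ₖ λₖ = 0, ∑ₖ∑ₗ λₖ λₗ γ¹(xₖ,xₗ) ≤ 0; and (ii) γ¹ satisfies the hypermetric inequalities: for all integers λ₁,…,λₙ ∈ ℤ with ∑ₖ λₖ = 1, ∑ₖ∑ₗ λₖ λₗ γ¹(xₖ,xₗ) ≤ 0. -/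
open MeasureTheory Real

-- algebraic expansion
lemma mado_quad_expand {n : ℕ} (lam u : Fin n → ℝ) :
    ∑ k, ∑ l, lam k * lam l * (u k - u l)^2
      = (∑ k, lam k) * (∑ k, lam k * (u k)^2)
        + (∑ k, lam k * (u k)^2) * (∑ k, lam k)
        - 2 * (∑ k, lam k * u k)^2 := by
  have h1 : (∑ k, lam k * u k)^2 = ∑ k, ∑ l, (lam k * u k) * (lam l * u l) := by
    rw [sq, Finset.sum_mul_sum]
  have h2 : (∑ k, lam k) * (∑ l, lam l * (u l)^2)
      = ∑ k, ∑ l, lam k * (lam l * (u l)^2) := by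
    rw [Finset.sum_mul_sum]
  have h3 : (∑ k, lam k * (u k)^2) * (∑ l, lam l)
      = ∑ k, ∑ l, (lam k * (u k)^2) * lam l := by
    rw [Finset.sum_mul_sum]
  have key : ∀ k l : Fin n, lam k * lam l * (u k - u l)^2
      = lam k * (lam l * (u l)^2) + (lam k * (u k)^2) * lam l
        - 2 * ((lam k * u k) * (lam l * u l)) := by intro k l; ring
  calc ∑ k, ∑ l, lam k * lam l * (u k - u l)^2
      = ∑ k, ∑ l, (lam k * (lam l * (u l)^2) + (lam k * (u k)^2) * lam l
          - 2 * ((lam k * u k) * (lam l * u l))) := by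
        exact Finset.sum_congr rfl fun k _ => Finset.sum_congr rfl fun l _ => key k l
    _ = (∑ k, ∑ l, lam k * (lam l * (u l)^2)) + (∑ k, ∑ l, (lam k * (u k)^2) * lam l)
          - 2 * (∑ k, ∑ l, (lam k * u k) * (lam l * u l)) := by
        simp [Finset.sum_add_distrib, Finset.sum_sub_distrib, Finset.mul_sum]
    _ = _ := by rw [← h1, ← h2, ← h3]

-- pointwise kernel identity
lemma mado_ind_eq {a b t : ℝ} :
    (Set.Ico (min a b) (max a b)).indicator (fun _ => (1:ℝ)) t
      = ((if t < a then (1:ℝ) else 0) - (if t < b then 1 else 0))^2 := by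
  by_cases h1 : t < a <;> by_cases h2 : t < b <;>
    simp [Set.indicator_apply, Set.mem_Ico, h1, h2, lt_min_iff, min_le_iff, lt_max_iff,
      le_of_not_gt, not_lt]

-- key analytic lemma
lemma mado_abs_sum_nonpos {n : ℕ} (a lam : Fin n → ℝ)
    (h : ∀ u : Fin n → ℝ, (∀ k, u k = 0 ∨ u k = 1) →
      ∑ k, ∑ l, lam k * lam l * (u k - u l)^2 ≤ 0) :
    ∑ k, ∑ l, lam k * lam l * |a k - a l| ≤ 0 := by
  set ind : Fin n → Fin n → ℝ → ℝ := fun k l =>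
    (Set.Ico (min (a k) (a l)) (max (a k) (a l))).indicator (fun _ => (1:ℝ)) with hind
  have hintg : ∀ k l, Integrable (ind k l) := by
    intro k l
    rw [hind]
    simp only []
    rw [integrable_indicator_iff measurableSet_Ico]
    exact (integrableOn_const_iff (C := (1:ℝ)) (by simp)).2 (Or.inr measure_Ico_lt_top)
  have habs : ∀ k l, |a k - a l| = ∫ t, ind k l t := by
    intro k l
    rw [hind]
    simp only []
    rw [MeasureTheory.integral_indicator_const (1:ℝ) measurableSet_Ico]
    rw [Real.volume_real_Ico_of_le min_le_max]
    rw [smul_eq_mul, mul_one, max_sub_min_eq_abs, abs_sub_comm]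
  calc ∑ k, ∑ l, lam k * lam l * |a k - a l|
      = ∑ k, ∑ l, ∫ t, lam k * lam l * ind k l t := by
        refine Finset.sum_congr rfl fun k _ => Finset.sum_congr rfl fun l _ => ?_
        rw [habs k l, integral_const_mul]
    _ = ∫ t, ∑ k, ∑ l, lam k * lam l * ind k l t := by
        have hin : ∀ k : Fin n, ∑ l, ∫ t, lam k * lam l * ind k l t
            = ∫ t, ∑ l, lam k * lam l * ind k l t := fun k =>
          (integral_finset_sum _ (fun l _ => (hintg k l).const_mul _)).symm
        rw [Finset.sum_congr rfl fun k _ => hin k,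
          ← integral_finset_sum _ (fun k _ => integrable_finset_sum _
            (fun l _ => (hintg k l).const_mul _))]
    _ ≤ 0 := by
        apply integral_nonpos
        intro t
        have hu : ∀ k, (if t < a k then (1:ℝ) else 0) = 0 ∨ (if t < a k then (1:ℝ) else 0) = 1 := by
          intro k; by_cases h1 : t < a k <;> simp [h1]
        have := h (fun k => if t < a k then (1:ℝ) else 0) hu
        refine le_trans (le_of_eq ?_) this
        refine Finset.sum_congr rfl fun k _ => Finset.sum_congr rfl fun l _ => ?_
        rw [hind]
        simp only []
        rw [mado_ind_eq]

lemma mado_negType {n : ℕ} (a lam : Fin n → ℝ) (hsum : (∑ k, lam k) = 0) :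
    ∑ k, ∑ l, lam k * lam l * |a k - a l| ≤ 0 := by
  apply mado_abs_sum_nonpos
  intro u _
  rw [mado_quad_expand, hsum]
  nlinarith [sq_nonneg (∑ k, lam k * u k)]

lemma mado_hyper {n : ℕ} (a : Fin n → ℝ) (lam : Fin n → ℤ) (hsum : (∑ k, lam k) = 1) :
    ∑ k, ∑ l, ((lam k : ℝ) * (lam l : ℝ)) * |a k - a l| ≤ 0 := by
  apply mado_abs_sum_nonpos a (fun k => (lam k : ℝ))
  intro u hu
  rw [mado_quad_expand]
  have hs : (∑ k, ((lam k : ℝ))) = 1 := by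
    have := congrArg (fun m : ℤ => (m : ℝ)) hsum
    push_cast at this
    simpa using this
  have hsq : ∀ k, (u k)^2 = u k := fun k => by rcases hu k with h | h <;> simp [h]
  simp_rw [hsq, hs, one_mul, mul_one]
  set m : ℤ := ∑ k, if u k = 1 then lam k else 0 with hm
  have hms : ((m : ℝ)) = ∑ k, (lam k : ℝ) * u k := by
    rw [hm]
    push_cast
    refine Finset.sum_congr rfl fun k _ => ?_
    rcases hu k with h | h <;> simp [h]
  have hmm : (0 : ℤ) ≤ m * (m - 1) := by
    rcases le_or_gt m 0 with h | h
    · nlinarith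
    · exact mul_nonneg (by omega) (by omega)
  have hmm' : (0 : ℝ) ≤ (m : ℝ) * ((m : ℝ) - 1) := by exact_mod_cast hmm
  nlinarith [hms]

lemma mado_main {X : Type*} {Ω : Type*} [MeasurableSpace Ω] (P : Measure Ω)
    [IsProbabilityMeasure P] (Z : X → Ω → ℝ)
    (hint : ∀ x y : X, Integrable (fun ω => |Z x ω - Z y ω|) P)
    (γ1 : X × X → ℝ)
    (hγ1 : ∀ x y : X, γ1 (x, y) = (1 / 2) * ∫ ω, |Z x ω - Z y ω| ∂P)
    (n : ℕ) (x : Fin n → X) (c : Fin n → Fin n → ℝ)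
    (hpt : ∀ ω, ∑ k, ∑ l, c k l * |Z (x k) ω - Z (x l) ω| ≤ 0) :
    ∑ k, ∑ l, c k l * γ1 (x k, x l) ≤ 0 := by
  have hIg : ∀ k l : Fin n, Integrable (fun ω => c k l * |Z (x k) ω - Z (x l) ω|) P :=
    fun k l => (hint _ _).const_mul _
  calc ∑ k, ∑ l, c k l * γ1 (x k, x l)
      = ∑ k, ∑ l, (1/2) * ∫ ω, c k l * |Z (x k) ω - Z (x l) ω| ∂P := by
        refine Finset.sum_congr rfl fun k _ => Finset.sum_congr rfl fun l _ => ?_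
        rw [hγ1, integral_const_mul]; ring
    _ = (1/2) * ∑ k, ∑ l, ∫ ω, c k l * |Z (x k) ω - Z (x l) ω| ∂P := by
        simp_rw [Finset.mul_sum]
    _ = (1/2) * ∫ ω, ∑ k, ∑ l, c k l * |Z (x k) ω - Z (x l) ω| ∂P := by
        have hin : ∀ k : Fin n, ∑ l, ∫ ω, c k l * |Z (x k) ω - Z (x l) ω| ∂P
            = ∫ ω, ∑ l, c k l * |Z (x k) ω - Z (x l) ω| ∂P := fun k =>
          (integral_finset_sum _ (fun l _ => hIg k l)).symm
        rw [Finset.sum_congr rfl fun k _ => hin k,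
          ← integral_finset_sum _ (fun k _ => integrable_finset_sum _ (fun l _ => hIg k l))]
    _ ≤ 0 := by
        have := integral_nonpos (μ := P) hpt
        linarith

/-- Any madogram `γ1(x,y) = (1/2)·E[|Z x − Z y|]` satisfies the negative-type
inequalities and the hypermetric inequalities. -/
theorem madogram_negativeType_and_hypermetric
    {X : Type*} {Ω : Type*} [MeasurableSpace Ω] (P : Measure Ω)
    [IsProbabilityMeasure P] (Z : X → Ω → ℝ)
    (hmeas : ∀ x, Measurable (Z x))
    (hint : ∀ x y : X, Integrable (fun ω => |Z x ω - Z y ω|) P)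
    (γ1 : X × X → ℝ)
    (hγ1 : ∀ x y : X, γ1 (x, y) = (1 / 2) * ∫ ω, |Z x ω - Z y ω| ∂P)
    (n : ℕ) (hn : 0 < n) (x : Fin n → X) :
    (∀ lam : Fin n → ℝ, (∑ k, lam k) = 0 →
      ∑ k, ∑ l, lam k * lam l * γ1 (x k, x l) ≤ 0) ∧
    (∀ lam : Fin n → ℤ, (∑ k, lam k) = 1 →
      ∑ k, ∑ l, ((lam k : ℝ) * (lam l : ℝ)) * γ1 (x k, x l) ≤ 0) := by
  constructor
  · intro lam hsum
    exact mado_main P Z hint γ1 hγ1 n x (fun k l => lam k * lam l)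
      (fun ω => mado_negType (fun k => Z (x k) ω) lam hsum)
  · intro lam hsum
    exact mado_main P Z hint γ1 hγ1 n x (fun k l => (lam k : ℝ) * (lam l : ℝ))
      (fun ω => mado_hyper (fun k => Z (x k) ω) lam hsum)
end

section
/- Let N ≥ 1 and let X = { x ∈ ℝ^{N+1} : ‖x‖ = 1 } be the unit N-sphere, with geodesic (great-circle) distance d(x,y) = arccos(⟨x,y⟩). Then for every ϖ ∈ [0,1], the function g(x,y) = ϖ·d(x,y)/(2π) = ϖ·arccos(⟨x,y⟩)/(2π) is an indicator variogram on X. -/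
open MeasureTheory Real Set
open scoped RealInnerProductSpace ENNReal NNReal

noncomputable section VarAux

namespace VarAux

lemma integrable_g1 : Integrable (fun x : ℝ => rexp (-2⁻¹ * x ^ 2)) :=
  integrable_exp_neg_mul_sq (by norm_num)

lemma g1_full : ∫ x : ℝ, rexp (-2⁻¹ * x ^ 2) = √(2 * π) := by
  rw [integral_gaussian]
  rw [show π / 2⁻¹ = 2 * π by ring]

lemma g1_Ioi : ∫ x in Set.Ioi (0:ℝ), rexp (-2⁻¹ * x ^ 2) = √(2 * π) / 2 := by
  rw [integral_gaussian_Ioi]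
  rw [show π / 2⁻¹ = 2 * π by ring]

lemma r_gauss : ∫ r in Set.Ioi (0:ℝ), r * rexp (-2⁻¹ * r ^ 2) = 1 := by
  have h := integral_Ioi_of_hasDerivAt_of_tendsto
    (f := fun r : ℝ => -rexp (-2⁻¹ * r ^ 2))
    (f' := fun r : ℝ => r * rexp (-2⁻¹ * r ^ 2)) (a := 0) (m := 0)
    ?_ ?_ ?_ ?_
  · rw [h]; simp
  · exact ((continuous_exp.comp (by continuity)).neg).continuousWithinAt
  · intro x _
    have h1 : HasDerivAt (fun r : ℝ => -2⁻¹ * r ^ 2) (-2⁻¹ * (2 * x ^ 1)) x :=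
      (hasDerivAt_pow 2 x).const_mul _
    have h2 : HasDerivAt (fun r : ℝ => -rexp (-2⁻¹ * r ^ 2))
        (-(rexp (-2⁻¹ * x ^ 2) * (-2⁻¹ * (2 * x ^ 1)))) x := (h1.exp).neg
    refine h2.congr_deriv ?_
    show _ = x * rexp (-2⁻¹ * x ^ 2)
    ring
  · exact (integrable_mul_exp_neg_mul_sq (by norm_num : (0:ℝ) < 2⁻¹)).integrableOn
  · have : Filter.Tendsto (fun r : ℝ => -2⁻¹ * r ^ 2) Filter.atTop Filter.atBot := by
      have hsq : Filter.Tendsto (fun r : ℝ => r ^ 2) Filter.atTop Filter.atTop := by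
        simpa [pow_two] using Filter.Tendsto.atTop_mul_atTop₀ Filter.tendsto_id Filter.tendsto_id
      exact Filter.Tendsto.const_mul_atTop_of_neg (by norm_num : (-2⁻¹ : ℝ) < 0) hsq
    have := (Real.tendsto_exp_atBot.comp this).neg
    simpa using this

def K (m : ℕ) : ℝ := (2 * π) ^ ((m : ℝ) / 2)

lemma twopi_pos : (0:ℝ) < 2 * π := by positivity

lemma K_pos (m : ℕ) : 0 < K m := Real.rpow_pos_of_pos twopi_pos _

lemma K_succ_succ (m : ℕ) : K (m + 2) = K m * (2 * π) := by
  unfold K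
  have h : ((m : ℝ) + 2) / 2 = (m : ℝ) / 2 + 1 := by ring
  push_cast
  rw [h, Real.rpow_add twopi_pos, Real.rpow_one]

lemma gaussE (m : ℕ) :
    ∫ v : EuclideanSpace ℝ (Fin m), rexp (-2⁻¹ * ‖v‖ ^ 2) = K m := by
  rw [show (fun v : EuclideanSpace ℝ (Fin m) => rexp (-2⁻¹ * ‖v‖ ^ 2))
      = fun v => rexp (-(2⁻¹:ℝ) * ‖v‖ ^ 2) by norm_num]
  rw [GaussianFourier.integral_rexp_neg_mul_sq_norm (by norm_num : (0:ℝ) < 2⁻¹)]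
  unfold K
  rw [finrank_euclideanSpace_fin, show π / (2⁻¹:ℝ) = 2 * π by ring]


lemma gauss_equiv_eq (m : ℕ) (v : EuclideanSpace ℝ (Fin m)) :
    rexp (-2⁻¹ * ∑ i, ((MeasurableEquiv.toLp 2 (Fin m → ℝ)).symm v) i ^ 2)
      = rexp (-2⁻¹ * ‖v‖ ^ 2) := by
  have hv : ‖v‖ ^ 2 = ∑ i, v i ^ 2 := by
    rw [EuclideanSpace.norm_eq, Real.sq_sqrt (by positivity)]
    simp [sq_abs]
  rw [hv]
  rfl

lemma gaussPi (m : ℕ) :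
    ∫ z : Fin m → ℝ, rexp (-2⁻¹ * ∑ i, z i ^ 2) = K m := by
  rw [← gaussE m,
    ← (EuclideanSpace.volume_preserving_symm_measurableEquiv_toLp (Fin m)).integral_comp
      (MeasurableEquiv.measurableEmbedding _) (fun z : Fin m → ℝ => rexp (-2⁻¹ * ∑ i, z i ^ 2))]
  congr 1
  funext v
  exact gauss_equiv_eq m v

lemma integrable_gaussE (m : ℕ) :
    Integrable (fun v : EuclideanSpace ℝ (Fin m) => rexp (-2⁻¹ * ‖v‖ ^ 2)) := by
  have h := (GaussianFourier.integrable_cexp_neg_mul_sq_norm_add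
      (V := EuclideanSpace ℝ (Fin m)) (b := (2⁻¹ : ℂ)) (by norm_num) 0 0).norm
  refine h.congr (Filter.Eventually.of_forall fun v => ?_)
  simp only [Complex.norm_exp]
  congr 1
  have : (-(2⁻¹:ℂ) * (‖v‖:ℂ) ^ 2 + 0 * ((inner ℝ (0 : EuclideanSpace ℝ (Fin m)) v : ℝ) : ℂ))
      = ((-2⁻¹ * ‖v‖ ^ 2 : ℝ) : ℂ) := by push_cast; ring
  rw [this, Complex.ofReal_re]

lemma integrable_gaussPi (m : ℕ) :
    Integrable (fun z : Fin m → ℝ => rexp (-2⁻¹ * ∑ i, z i ^ 2)) := by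
  rw [← (EuclideanSpace.volume_preserving_symm_measurableEquiv_toLp (Fin m)).integrable_comp_emb
      (MeasurableEquiv.measurableEmbedding _)]
  exact (integrable_gaussE m).congr
    (Filter.Eventually.of_forall fun v => (gauss_equiv_eq m v).symm)

def e2 (p : ℝ × ℝ) : ℝ := rexp (-2⁻¹ * (p.1 ^ 2 + p.2 ^ 2))

lemma e2_pos (p : ℝ × ℝ) : 0 < e2 p := Real.exp_pos _

lemma measurable_e2 : Measurable e2 := by
  unfold e2
  fun_prop

lemma integrable_e2 : Integrable e2 := by
  rw [Measure.volume_eq_prod]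
  have h : e2 = fun p : ℝ × ℝ => rexp (-2⁻¹ * p.1 ^ 2) * rexp (-2⁻¹ * p.2 ^ 2) := by
    funext p; rw [e2, ← Real.exp_add]; congr 1; ring
  rw [h]
  exact integrable_g1.mul_prod integrable_g1

lemma integrable_ind_e2 {s : Set (ℝ × ℝ)} (hs : MeasurableSet s) :
    Integrable (fun p => s.indicator 1 p * e2 p) := by
  refine integrable_e2.mono' ?_ (Filter.Eventually.of_forall fun p => ?_)
  · exact ((measurable_one.indicator hs).mul measurable_e2).aestronglyMeasurable
  · rw [Real.norm_eq_abs, abs_mul]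
    by_cases h : p ∈ s <;>
      simp [Set.indicator_apply, h, abs_of_pos (e2_pos p), (e2_pos p).le]

lemma cos_pos_iff' {x : ℝ} (h1 : -(π + π/2) < x) (h2 : x < π + π/2) :
    0 < cos x ↔ -(π/2) < x ∧ x < π/2 := by
  constructor
  · intro h
    by_contra hc
    push_neg at hc
    by_cases hA : -(π/2) < x
    · have hx : π/2 ≤ x := hc hA
      exact absurd h (not_lt.2 (Real.cos_nonpos_of_pi_div_two_le_of_le hx h2.le))
    · push_neg at hA
      have : Real.cos (-x) ≤ 0 :=
        Real.cos_nonpos_of_pi_div_two_le_of_le (by linarith) (by linarith)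
      rw [Real.cos_neg] at this
      exact absurd h (not_lt.2 this)
  · rintro ⟨ha, hb⟩
    exact Real.cos_pos_of_mem_Ioo ⟨ha, hb⟩

lemma arc2 {θ : ℝ} (h0 : 0 ≤ θ) (hπ : θ ≤ π) :
    volume ({φ : ℝ | 0 < cos (φ - θ)} ∩ Ioo (-π) π) = ENNReal.ofReal π := by
  have hpi := pi_pos
  rcases le_or_gt θ (π/2) with h | h
  · have hset : {φ : ℝ | 0 < cos (φ - θ)} ∩ Ioo (-π) π = Ioo (θ - π/2) (θ + π/2) := by
      ext φ
      simp only [Set.mem_inter_iff, Set.mem_setOf_eq, Set.mem_Ioo]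
      constructor
      · rintro ⟨hc, hl, hr⟩
        have hb := (cos_pos_iff' (x := φ - θ) (by linarith) (by linarith)).1 hc
        exact ⟨by linarith [hb.1], by linarith [hb.2]⟩
      · rintro ⟨hl, hr⟩
        exact ⟨Real.cos_pos_of_mem_Ioo ⟨by linarith, by linarith⟩, by linarith, by linarith⟩
    rw [hset, Real.volume_Ioo]
    congr 1; ring
  · have hset : {φ : ℝ | 0 < cos (φ - θ)} ∩ Ioo (-π) π
        = Ioo (-π) (θ - 3*π/2) ∪ Ioo (θ - π/2) π := by
      ext φ
      simp only [Set.mem_inter_iff, Set.mem_setOf_eq, Set.mem_Ioo, Set.mem_union]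
      constructor
      · rintro ⟨hc, hl, hr⟩
        rcases lt_trichotomy (φ - θ) (-(3*π/2)) with hx | hx | hx
        · exact Or.inl ⟨hl, by linarith⟩
        · exfalso
          have hc0 : Real.cos (-(3*π/2)) = 0 := by
            rw [Real.cos_neg, show (3*π/2:ℝ) = π + π/2 by ring, Real.cos_add]
            simp
          rw [hx, hc0] at hc
          exact lt_irrefl 0 hc
        · have hb := (cos_pos_iff' (x := φ - θ) (by linarith) (by linarith)).1 hc
          exact Or.inr ⟨by linarith [hb.1], hr⟩
      · rintro (⟨hl, hr⟩ | ⟨hl, hr⟩)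
        · have hcp : 0 < Real.cos (φ - θ + 2*π) :=
            Real.cos_pos_of_mem_Ioo ⟨by linarith, by linarith⟩
          rw [Real.cos_add_two_pi] at hcp
          exact ⟨hcp, hl, by linarith⟩
        · exact ⟨Real.cos_pos_of_mem_Ioo ⟨by linarith, by linarith⟩, by linarith, hr⟩
    rw [hset, measure_union ?_ measurableSet_Ioo, Real.volume_Ioo, Real.volume_Ioo,
      ← ENNReal.ofReal_add (by linarith) (by linarith)]
    · congr 1; ring
    · rw [Set.disjoint_left]
      rintro a ⟨_, h1⟩ ⟨h2, _⟩
      linarith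

lemma arc3 {θ : ℝ} (h0 : 0 ≤ θ) (hπ : θ ≤ π) :
    volume ({φ : ℝ | 0 < cos φ ∧ 0 < cos (φ - θ)} ∩ Ioo (-π) π) = ENNReal.ofReal (π - θ) := by
  have hpi := pi_pos
  have hset : {φ : ℝ | 0 < cos φ ∧ 0 < cos (φ - θ)} ∩ Ioo (-π) π
      = Ioo (θ - π/2) (π/2) := by
    ext φ
    simp only [Set.mem_inter_iff, Set.mem_setOf_eq, Set.mem_Ioo]
    constructor
    · rintro ⟨⟨hc1, hc2⟩, hl, hr⟩
      have h1 := (cos_pos_iff' (x := φ) (by linarith) (by linarith)).1 hc1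
      have h2 := (cos_pos_iff' (x := φ - θ) (by linarith [h1.1]) (by linarith [h1.2])).1 hc2
      exact ⟨by linarith [h2.1], h1.2⟩
    · rintro ⟨hl, hr⟩
      refine ⟨⟨Real.cos_pos_of_mem_Ioo ⟨by linarith, hr⟩,
        Real.cos_pos_of_mem_Ioo ⟨by linarith, by linarith⟩⟩, by linarith, by linarith⟩
  rw [hset, Real.volume_Ioo]
  congr 1; ring

lemma polar_ind (s : Set (ℝ × ℝ)) (hs : MeasurableSet s)
    (hray : ∀ r : ℝ, 0 < r → ∀ φ : ℝ, ((r * cos φ, r * sin φ) ∈ s ↔ (cos φ, sin φ) ∈ s)) :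
    ∫ p : ℝ × ℝ, s.indicator 1 p * e2 p
      = (volume ({φ : ℝ | (cos φ, sin φ) ∈ s} ∩ Ioo (-π) π)).toReal := by
  have hmeas : MeasurableSet {φ : ℝ | (cos φ, sin φ) ∈ s} :=
    (Real.continuous_cos.prodMk Real.continuous_sin).measurable hs
  rw [← integral_comp_polarCoord_symm (fun p => s.indicator 1 p * e2 p), polarCoord_target]
  have hEq : Set.EqOn
      (fun q : ℝ × ℝ => q.1 • (s.indicator 1 (polarCoord.symm q) * e2 (polarCoord.symm q)))
      (fun q : ℝ × ℝ =>
        (q.1 * rexp (-2⁻¹ * q.1 ^ 2)) * {φ : ℝ | (cos φ, sin φ) ∈ s}.indicator 1 q.2)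
      (Ioi (0:ℝ) ×ˢ Ioo (-π) π) := by
    rintro ⟨r, φ⟩ ⟨hr, _⟩
    have hr' : (0:ℝ) < r := hr
    simp only [polarCoord_symm_apply, smul_eq_mul]
    have he : e2 (r * cos φ, r * sin φ) = rexp (-2⁻¹ * r ^ 2) := by
      unfold e2
      rw [show (r * cos φ) ^ 2 + (r * sin φ) ^ 2 = r ^ 2 * (sin φ ^ 2 + cos φ ^ 2) by ring,
        Real.sin_sq_add_cos_sq, mul_one]
    have hi : s.indicator (1 : ℝ × ℝ → ℝ) (r * cos φ, r * sin φ)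
        = ({φ : ℝ | (cos φ, sin φ) ∈ s}).indicator (1 : ℝ → ℝ) φ := by
      by_cases hmem : (Real.cos φ, Real.sin φ) ∈ s
      · rw [Set.indicator_of_mem ((hray r hr' φ).2 hmem),
          Set.indicator_of_mem (show φ ∈ {φ : ℝ | (cos φ, sin φ) ∈ s} from hmem)]
        rfl
      · rw [Set.indicator_of_notMem (fun hmem' => hmem ((hray r hr' φ).1 hmem')),
          Set.indicator_of_notMem (show φ ∉ {φ : ℝ | (cos φ, sin φ) ∈ s} from hmem)]
    rw [he, hi]
    ring
  rw [Measure.volume_eq_prod, setIntegral_congr_fun (measurableSet_Ioi.prod measurableSet_Ioo) hEq,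
    setIntegral_prod_mul (fun a : ℝ => a * rexp (-2⁻¹ * a ^ 2))
      (fun φ : ℝ => ({φ : ℝ | (cos φ, sin φ) ∈ s}).indicator 1 φ),
    r_gauss, one_mul, setIntegral_indicator hmeas]
  simp only [Pi.one_apply]
  rw [setIntegral_const, smul_eq_mul, mul_one, Set.inter_comm, measureReal_def]

lemma L2 {θ : ℝ} (h0 : 0 ≤ θ) (hπ : θ ≤ π) :
    ∫ p : ℝ × ℝ, ({q : ℝ × ℝ | 0 < cos θ * q.1 + sin θ * q.2}).indicator 1 p * e2 p = π := by
  have hs : MeasurableSet {q : ℝ × ℝ | 0 < cos θ * q.1 + sin θ * q.2} :=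
    measurableSet_lt measurable_const (by fun_prop)
  rw [polar_ind _ hs ?ray]
  case ray =>
    intro r hr φ
    simp only [Set.mem_setOf_eq]
    constructor
    · intro h
      by_contra hX
      push_neg at hX
      nlinarith [mul_nonpos_of_nonneg_of_nonpos hr.le hX]
    · intro h
      nlinarith [mul_pos hr h]
  have hset : {φ : ℝ | (cos φ, sin φ) ∈ {q : ℝ × ℝ | 0 < cos θ * q.1 + sin θ * q.2}}
      = {φ : ℝ | 0 < cos (φ - θ)} := by
    ext φ
    simp only [Set.mem_setOf_eq, Real.cos_sub]
    constructor <;> intro h <;> linarith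
  rw [hset, arc2 h0 hπ, ENNReal.toReal_ofReal pi_pos.le]

lemma L1 : ∫ p : ℝ × ℝ, ({q : ℝ × ℝ | 0 < q.1}).indicator 1 p * e2 p = π := by
  have h := L2 (le_refl 0) pi_pos.le
  have hset0 : {q : ℝ × ℝ | 0 < cos 0 * q.1 + sin 0 * q.2} = {q : ℝ × ℝ | 0 < q.1} := by
    ext q; simp
  rwa [hset0] at h

lemma L3 {θ : ℝ} (h0 : 0 ≤ θ) (hπ : θ ≤ π) :
    ∫ p : ℝ × ℝ,
      ({q : ℝ × ℝ | 0 < q.1 ∧ 0 < cos θ * q.1 + sin θ * q.2}).indicator 1 p * e2 p = π - θ := by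
  have hs : MeasurableSet {q : ℝ × ℝ | 0 < q.1 ∧ 0 < cos θ * q.1 + sin θ * q.2} := by
    have : {q : ℝ × ℝ | 0 < q.1 ∧ 0 < cos θ * q.1 + sin θ * q.2}
        = {q : ℝ × ℝ | 0 < q.1} ∩ {q : ℝ × ℝ | 0 < cos θ * q.1 + sin θ * q.2} := rfl
    rw [this]
    exact (measurableSet_lt measurable_const measurable_fst).inter
      (measurableSet_lt measurable_const (by fun_prop))
  rw [polar_ind _ hs ?ray]
  case ray =>
    intro r hr φ
    simp only [Set.mem_setOf_eq]
    have h1 : 0 < r * cos φ ↔ 0 < cos φ := by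
      constructor
      · intro h
        by_contra hX
        push_neg at hX
        nlinarith [mul_nonpos_of_nonneg_of_nonpos hr.le hX]
      · intro h
        exact mul_pos hr h
    have h2 : 0 < cos θ * (r * cos φ) + sin θ * (r * sin φ)
        ↔ 0 < cos θ * cos φ + sin θ * sin φ := by
      constructor
      · intro h
        by_contra hX
        push_neg at hX
        nlinarith [mul_nonpos_of_nonneg_of_nonpos hr.le hX]
      · intro h
        nlinarith [mul_pos hr h]
    exact and_congr h1 h2
  have hset : {φ : ℝ | (cos φ, sin φ) ∈ {q : ℝ × ℝ | 0 < q.1 ∧ 0 < cos θ * q.1 + sin θ * q.2}}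
      = {φ : ℝ | 0 < cos φ ∧ 0 < cos (φ - θ)} := by
    ext φ
    simp only [Set.mem_setOf_eq, Real.cos_sub]
    constructor <;> rintro ⟨ha, hb⟩ <;> exact ⟨ha, by linarith⟩
  rw [hset, arc3 h0 hπ, ENNReal.toReal_ofReal (by linarith)]

lemma D2 {θ : ℝ} (h0 : 0 ≤ θ) (hπ : θ ≤ π) :
    ∫ p : ℝ × ℝ,
      (({q : ℝ × ℝ | 0 < q.1}).indicator 1 p
        - ({q : ℝ × ℝ | 0 < cos θ * q.1 + sin θ * q.2}).indicator 1 p) ^ 2 * e2 p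
      = 2 * θ := by
  have hs1 : MeasurableSet {q : ℝ × ℝ | 0 < q.1} :=
    measurableSet_lt measurable_const measurable_fst
  have hs2 : MeasurableSet {q : ℝ × ℝ | 0 < cos θ * q.1 + sin θ * q.2} :=
    measurableSet_lt measurable_const (by fun_prop)
  have hs3 : MeasurableSet {q : ℝ × ℝ | 0 < q.1 ∧ 0 < cos θ * q.1 + sin θ * q.2} :=
    hs1.inter hs2
  have hpt : (fun p : ℝ × ℝ =>
      (({q : ℝ × ℝ | 0 < q.1}).indicator 1 p
        - ({q : ℝ × ℝ | 0 < cos θ * q.1 + sin θ * q.2}).indicator 1 p) ^ 2 * e2 p)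
      = fun p : ℝ × ℝ =>
        (({q : ℝ × ℝ | 0 < q.1}).indicator 1 p * e2 p
          + ({q : ℝ × ℝ | 0 < cos θ * q.1 + sin θ * q.2}).indicator 1 p * e2 p)
        - 2 * (({q : ℝ × ℝ | 0 < q.1 ∧ 0 < cos θ * q.1 + sin θ * q.2}).indicator 1 p * e2 p) := by
    funext p
    by_cases h1 : 0 < p.1 <;> by_cases h2 : 0 < cos θ * p.1 + sin θ * p.2 <;>
      simp [Set.indicator_apply, h1, h2] <;> ring
  have hi1 := integrable_ind_e2 hs1
  have hi2 := integrable_ind_e2 hs2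
  have hi12 : Integrable (fun p : ℝ × ℝ =>
      ({q : ℝ × ℝ | 0 < q.1}).indicator 1 p * e2 p
        + ({q : ℝ × ℝ | 0 < cos θ * q.1 + sin θ * q.2}).indicator 1 p * e2 p) := hi1.add hi2
  have hi3 : Integrable (fun p : ℝ × ℝ =>
      2 * (({q : ℝ × ℝ | 0 < q.1 ∧ 0 < cos θ * q.1 + sin θ * q.2}).indicator 1 p * e2 p)) :=
    (integrable_ind_e2 hs3).const_mul 2
  rw [hpt, integral_sub hi12 hi3,
    integral_add hi1 hi2, integral_const_mul,
    L1, L2 h0 hπ, L3 h0 hπ]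
  ring

abbrev Esp (M : ℕ) := EuclideanSpace ℝ (Fin (M + 2))

def dens (M : ℕ) (u : Esp M) : ℝ≥0 := Real.toNNReal ((K (M + 2))⁻¹ * rexp (-2⁻¹ * ‖u‖ ^ 2))

lemma dens_meas (M : ℕ) : Measurable (dens M) := by
  apply measurable_real_toNNReal.comp
  fun_prop

lemma dens_coe (M : ℕ) (u : Esp M) : (dens M u : ℝ) = (K (M + 2))⁻¹ * rexp (-2⁻¹ * ‖u‖ ^ 2) :=
  Real.coe_toNNReal _ (mul_nonneg (inv_nonneg.2 (K_pos (M + 2)).le) (Real.exp_pos _).le)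

def μM (M : ℕ) : Measure (Esp M) := volume.withDensity fun u => (dens M u : ℝ≥0∞)

lemma integral_μM (M : ℕ) (g : Esp M → ℝ) :
    ∫ u, g u ∂(μM M) = (K (M + 2))⁻¹ * ∫ u, g u * rexp (-2⁻¹ * ‖u‖ ^ 2) := by
  rw [μM, integral_withDensity_eq_integral_smul (dens_meas M)]
  rw [show (fun u => dens M u • g u)
      = fun u => (K (M + 2))⁻¹ * (g u * rexp (-2⁻¹ * ‖u‖ ^ 2)) by
    funext u; rw [NNReal.smul_def, dens_coe, smul_eq_mul]; ring]
  rw [integral_const_mul]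

lemma isProb (M : ℕ) : IsProbabilityMeasure (μM M) := by
  constructor
  rw [μM, withDensity_apply _ MeasurableSet.univ, Measure.restrict_univ]
  have hInt : Integrable (fun u : Esp M => (K (M + 2))⁻¹ * rexp (-2⁻¹ * ‖u‖ ^ 2)) :=
    (integrable_gaussE (M + 2)).const_mul _
  have hNN : 0 ≤ᶠ[ae volume] fun u : Esp M => (K (M + 2))⁻¹ * rexp (-2⁻¹ * ‖u‖ ^ 2) :=
    Filter.Eventually.of_forall fun u =>
      mul_nonneg (inv_nonneg.2 (K_pos (M + 2)).le) (Real.exp_pos _).le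
  have h := ofReal_integral_eq_lintegral_ofReal hInt hNN
  have hval : ∫ u : Esp M, (K (M + 2))⁻¹ * rexp (-2⁻¹ * ‖u‖ ^ 2) = 1 := by
    rw [integral_const_mul, gaussE, inv_mul_cancel₀ (K_pos (M + 2)).ne']
  rw [hval] at h
  simp only [ENNReal.ofReal_one] at h
  rw [show (fun u : Esp M => ((dens M u : ℝ≥0) : ℝ≥0∞))
      = fun u : Esp M => ENNReal.ofReal ((K (M + 2))⁻¹ * rexp (-2⁻¹ * ‖u‖ ^ 2)) from rfl]
  exact h.symm

lemma key (M : ℕ) (F : ℝ × ℝ → ℝ)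
    (b : OrthonormalBasis (Fin (M + 2)) ℝ (Esp M)) :
    ∫ u, F (⟪u, b 0⟫, ⟪u, b 1⟫) ∂(μM M) = (∫ p : ℝ × ℝ, F p * e2 p) / (2 * π) := by
  rw [integral_μM]
  have h1 : ∫ u : Esp M, F (⟪u, b 0⟫, ⟪u, b 1⟫) * rexp (-2⁻¹ * ‖u‖ ^ 2)
      = ∫ v : EuclideanSpace ℝ (Fin (M + 2)), F (v 0, v 1) * rexp (-2⁻¹ * ‖v‖ ^ 2) := by
    rw [← (b.measurePreserving_repr_symm).integral_comp
        b.repr.symm.toHomeomorph.measurableEmbedding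
        (fun u => F (⟪u, b 0⟫, ⟪u, b 1⟫) * rexp (-2⁻¹ * ‖u‖ ^ 2))]
    congr 1
    funext v
    have h0 : ⟪b.repr.symm v, b 0⟫ = v 0 := by
      rw [real_inner_comm, ← OrthonormalBasis.repr_apply_apply,
        LinearIsometryEquiv.apply_symm_apply]
    have h1' : ⟪b.repr.symm v, b 1⟫ = v 1 := by
      rw [real_inner_comm, ← OrthonormalBasis.repr_apply_apply,
        LinearIsometryEquiv.apply_symm_apply]
    simp only [h0, h1', LinearIsometryEquiv.norm_map]
  have h2 : ∫ v : EuclideanSpace ℝ (Fin (M + 2)), F (v 0, v 1) * rexp (-2⁻¹ * ‖v‖ ^ 2)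
      = ∫ z : Fin (M + 2) → ℝ, F (z 0, z 1) * rexp (-2⁻¹ * ∑ i, z i ^ 2) := by
    rw [← (EuclideanSpace.volume_preserving_symm_measurableEquiv_toLp (Fin (M + 2))).integral_comp
        (MeasurableEquiv.measurableEmbedding _)
        (fun z : Fin (M + 2) → ℝ => F (z 0, z 1) * rexp (-2⁻¹ * ∑ i, z i ^ 2))]
    congr 1
    funext v
    beta_reduce
    rw [gauss_equiv_eq]
    rfl
  have h3 : ∫ z : Fin (M + 2) → ℝ, F (z 0, z 1) * rexp (-2⁻¹ * ∑ i, z i ^ 2)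
      = (∫ p : ℝ × ℝ, F p * e2 p) * K M := by
    have h1f : (1 : Fin (M + 2)) = Fin.succ 0 := by ext; simp
    set e₁ := MeasurableEquiv.piFinSuccAbove (fun _ : Fin (M + 2) => ℝ) 0 with he₁
    set e₂ := MeasurableEquiv.piFinSuccAbove (fun _ : Fin (M + 1) => ℝ) 0 with he₂
    set e₃ : (Fin (M + 2) → ℝ) ≃ᵐ (ℝ × ℝ) × (Fin M → ℝ) :=
      e₁.trans (((MeasurableEquiv.refl ℝ).prodCongr e₂).trans
        MeasurableEquiv.prodAssoc.symm) with he₃d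
    have mp3 : MeasurePreserving (⇑e₃) (volume : Measure (Fin (M + 2) → ℝ))
        ((volume : Measure (ℝ × ℝ)).prod (volume : Measure (Fin M → ℝ))) := by
      have mp₁ := measurePreserving_piFinSuccAbove (fun _ : Fin (M + 2) => (volume : Measure ℝ)) 0
      have mp₂ := measurePreserving_piFinSuccAbove (fun _ : Fin (M + 1) => (volume : Measure ℝ)) 0
      have mpc : MeasurePreserving (Prod.map (id : ℝ → ℝ) ⇑e₂)
          ((volume : Measure ℝ).prod (Measure.pi fun _ : Fin (M + 1) => (volume : Measure ℝ)))
          ((volume : Measure ℝ).prod ((volume : Measure ℝ).prod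
            (Measure.pi fun _ : Fin M => (volume : Measure ℝ)))) :=
        (MeasurePreserving.id _).prod mp₂
      have mpa := MeasurePreserving.symm _
        (measurePreserving_prodAssoc (volume : Measure ℝ) (volume : Measure ℝ)
          (Measure.pi fun _ : Fin M => (volume : Measure ℝ)))
      have hco : ⇑e₃ = (⇑(MeasurableEquiv.prodAssoc
          (α := ℝ) (β := ℝ) (γ := Fin M → ℝ)).symm) ∘ (Prod.map (id : ℝ → ℝ) ⇑e₂) ∘ ⇑e₁ := rfl
      rw [show (volume : Measure (Fin (M + 2) → ℝ)) = Measure.pi fun _ => volume from volume_pi,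
        show (volume : Measure (Fin M → ℝ)) = Measure.pi fun _ => volume from volume_pi,
        Measure.volume_eq_prod, hco]
      exact mpa.comp (mpc.comp mp₁)
    have hfun : (fun z : Fin (M + 2) → ℝ => F (z 0, z 1) * rexp (-2⁻¹ * ∑ i, z i ^ 2))
        = fun z : Fin (M + 2) → ℝ =>
          (F (e₃ z).1 * e2 (e₃ z).1) * rexp (-2⁻¹ * ∑ j, (e₃ z).2 j ^ 2) := by
      funext z
      have hz : e₃ z = ((z 0, z (Fin.succ 0)), fun j => z (Fin.succ (Fin.succ j))) := by
        show ((z 0, z (Fin.succAbove 0 (0 : Fin (M + 1)))),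
          fun j => z (Fin.succAbove 0 (Fin.succAbove (0 : Fin (M + 1)) j))) = _
        simp [Fin.zero_succAbove]
      rw [hz]
      have hsum : ∑ i, z i ^ 2
          = z 0 ^ 2 + (z (Fin.succ 0) ^ 2 + ∑ j, z (Fin.succ (Fin.succ j)) ^ 2) := by
        rw [Fin.sum_univ_succ (fun i => z i ^ 2), Fin.sum_univ_succ (fun i => z i.succ ^ 2)]
      rw [h1f, hsum]
      show F (z 0, z (Fin.succ 0)) * rexp _
        = F (z 0, z (Fin.succ 0)) * e2 (z 0, z (Fin.succ 0)) * rexp _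
      rw [show e2 (z 0, z (Fin.succ 0))
          = rexp (-2⁻¹ * (z 0 ^ 2 + z (Fin.succ 0) ^ 2)) from rfl,
        mul_assoc, ← Real.exp_add]
      congr 2
      ring
    calc ∫ z : Fin (M + 2) → ℝ, F (z 0, z 1) * rexp (-2⁻¹ * ∑ i, z i ^ 2)
        = ∫ q : (ℝ × ℝ) × (Fin M → ℝ), (F q.1 * e2 q.1) * rexp (-2⁻¹ * ∑ j, q.2 j ^ 2)
            ∂((volume : Measure (ℝ × ℝ)).prod (volume : Measure (Fin M → ℝ))) := by
          rw [hfun]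
          exact mp3.integral_comp e₃.measurableEmbedding
            (fun q : (ℝ × ℝ) × (Fin M → ℝ) => F q.1 * e2 q.1 * rexp (-2⁻¹ * ∑ j, q.2 j ^ 2))
      _ = (∫ p : ℝ × ℝ, F p * e2 p)
            * ∫ w : Fin M → ℝ, rexp (-2⁻¹ * ∑ j, w j ^ 2) :=
          integral_prod_mul (fun p : ℝ × ℝ => F p * e2 p)
            (fun w : Fin M → ℝ => rexp (-2⁻¹ * ∑ j, w j ^ 2))
      _ = (∫ p : ℝ × ℝ, F p * e2 p) * K M := by rw [gaussPi]
  rw [h1, h2, h3, K_succ_succ]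
  have hKM := K_pos M
  field_simp

lemma exists_onb (M : ℕ) (x y : Esp M) (hx : ‖x‖ = 1) (hy : ‖y‖ = 1) :
    ∃ b : OrthonormalBasis (Fin (M + 2)) ℝ (Esp M),
      b 0 = x ∧ y = ⟪x, y⟫ • x + √(1 - ⟪x, y⟫ ^ 2) • b 1 := by
  set t := ⟪x, y⟫ with ht
  have hxx : ⟪x, x⟫ = 1 := by
    rw [real_inner_self_eq_norm_mul_norm, hx, one_mul]
  have hyy : ⟪y, y⟫ = 1 := by
    rw [real_inner_self_eq_norm_mul_norm, hy, one_mul]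
  have habs : |t| ≤ 1 := by
    have h := abs_real_inner_le_norm x y
    rw [hx, hy] at h
    simpa using h
  have ht2 : t ^ 2 ≤ 1 := by nlinarith [abs_nonneg t, sq_abs t]
  have hone_ne : (1 : Fin (M + 2)) ≠ 0 := by simp [Fin.ext_iff]
  by_cases hs : √(1 - t ^ 2) = 0
  · -- degenerate case : y = x or y = -x
    have h2 : 1 - t ^ 2 ≤ 0 := by
      by_contra hpos
      push_neg at hpos
      exact (Real.sqrt_pos.2 hpos).ne' hs
    have ht1 : t ^ 2 = 1 := le_antisymm ht2 (by linarith)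
    -- get any ONB with b 0 = x
    have horth : Orthonormal ℝ (Set.restrict {(0 : Fin (M + 2))} fun _ => x) := by
      rw [orthonormal_iff_ite]
      rintro ⟨i, hi⟩ ⟨j, hj⟩
      simp only [Set.mem_singleton_iff] at hi hj
      subst hi; subst hj
      simp only [Set.restrict_apply, Subtype.mk_eq_mk]
      rw [if_true]
      exact hxx
    obtain ⟨b, hb⟩ := horth.exists_orthonormalBasis_extension_of_card_eq
      (by simp [finrank_euclideanSpace_fin])
    have hb0 : b 0 = x := hb 0 rfl
    refine ⟨b, hb0, ?_⟩
    rw [hs, zero_smul, add_zero]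
    rcases mul_eq_zero.1 (show (t - 1) * (t + 1) = 0 by nlinarith) with h | h
    · have ht1' : t = 1 := by linarith
      have hxy : x = y := (inner_eq_one_iff_of_norm_eq_one hx hy).1 (by rw [← ht, ht1'])
      rw [ht1', one_smul, hxy]
    · have ht1' : t = -1 := by linarith
      have hxy : x = -y := by
        have h1 : ⟪x, -y⟫ = (1 : ℝ) := by
          rw [inner_neg_right, ← ht, ht1']; norm_num
        exact (inner_eq_one_iff_of_norm_eq_one hx (by rw [norm_neg, hy])).1 h1
      rw [ht1', show y = -x by rw [hxy]; simp]
      simp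
  · -- generic case
    have hs0 : 0 ≤ √(1 - t ^ 2) := Real.sqrt_nonneg _
    have hspos : 0 < √(1 - t ^ 2) := lt_of_le_of_ne hs0 (Ne.symm hs)
    set s := √(1 - t ^ 2) with hsdef
    have hs2 : s ^ 2 = 1 - t ^ 2 := Real.sq_sqrt (by nlinarith)
    set e := s⁻¹ • (y - t • x) with he
    have hyx : ⟪y, x⟫ = t := by rw [real_inner_comm]
    have hsub : ⟪y - t • x, y - t • x⟫ = 1 - t ^ 2 := by
      simp only [inner_sub_left, inner_sub_right, real_inner_smul_left, real_inner_smul_right,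
        hxx, hyy, hyx, ← ht]
      ring
    have hxe : ⟪x, e⟫ = 0 := by
      rw [he, real_inner_smul_right, inner_sub_right, real_inner_smul_right, hxx, ← ht]
      ring
    have hee : ⟪e, e⟫ = 1 := by
      rw [he, real_inner_smul_left, real_inner_smul_right, hsub, ← hs2]
      field_simp
    set v : Fin (M + 2) → Esp M := fun i => if i = 0 then x else e with hv
    have hv0 : v 0 = x := if_pos rfl
    have hv1 : v 1 = e := if_neg hone_ne
    have horth : Orthonormal ℝ (Set.restrict {0, 1} v) := by
      rw [orthonormal_iff_ite]
      rintro ⟨i, hi⟩ ⟨j, hj⟩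
      simp only [Set.mem_insert_iff, Set.mem_singleton_iff] at hi hj
      simp only [Set.restrict_apply, Subtype.mk_eq_mk]
      rcases hi with hi | hi <;> rcases hj with hj | hj <;> subst hi <;> subst hj
      · change ⟪v 0, v 0⟫ = _; rw [if_pos rfl, hv0]; exact hxx
      · change ⟪v 0, v 1⟫ = _; rw [if_neg (Ne.symm hone_ne), hv0, hv1]; exact hxe
      · change ⟪v 1, v 0⟫ = _; rw [if_neg hone_ne, hv0, hv1, real_inner_comm]; exact hxe
      · change ⟪v 1, v 1⟫ = _; rw [if_pos rfl, hv1]; exact hee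
    obtain ⟨b, hb⟩ := horth.exists_orthonormalBasis_extension_of_card_eq
      (by simp [finrank_euclideanSpace_fin])
    have hb0 : b 0 = x := by
      have := hb 0 (by simp)
      simpa [hv] using this
    have hb1 : b 1 = e := by
      have := hb 1 (by simp)
      simpa [hv, hone_ne] using this
    refine ⟨b, hb0, ?_⟩
    rw [hb1, he, smul_smul, mul_inv_cancel₀ hs, one_smul]
    abel

lemma key_L1 (M : ℕ) (b : OrthonormalBasis (Fin (M + 2)) ℝ (Esp M)) :
    ∫ u, ({q : ℝ × ℝ | 0 < q.1}).indicator (1 : ℝ × ℝ → ℝ) (⟪u, b 0⟫, ⟪u, b 1⟫) ∂(μM M)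
      = 1 / 2 := by
  have h := key M (fun p : ℝ × ℝ => ({q : ℝ × ℝ | 0 < q.1}).indicator (1 : ℝ × ℝ → ℝ) p) b
  have h2 : (∫ p : ℝ × ℝ, ({q : ℝ × ℝ | 0 < q.1}).indicator (1 : ℝ × ℝ → ℝ) p * e2 p) / (2 * π)
      = 1 / 2 := by
    rw [L1, div_eq_div_iff (by positivity) (by norm_num : (2:ℝ) ≠ 0)]
    ring
  exact h.trans h2

lemma key_D2 (M : ℕ) {θ : ℝ} (h0 : 0 ≤ θ) (hπ : θ ≤ π)
    (b : OrthonormalBasis (Fin (M + 2)) ℝ (Esp M)) :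
    ∫ u, (({q : ℝ × ℝ | 0 < q.1}).indicator (1 : ℝ × ℝ → ℝ) (⟪u, b 0⟫, ⟪u, b 1⟫)
      - ({q : ℝ × ℝ | 0 < cos θ * q.1 + sin θ * q.2}).indicator (1 : ℝ × ℝ → ℝ)
          (⟪u, b 0⟫, ⟪u, b 1⟫)) ^ 2
      ∂(μM M) = θ / π := by
  have h := key M (fun p : ℝ × ℝ => (({q : ℝ × ℝ | 0 < q.1}).indicator (1 : ℝ × ℝ → ℝ) p
      - ({q : ℝ × ℝ | 0 < cos θ * q.1 + sin θ * q.2}).indicator (1 : ℝ × ℝ → ℝ) p) ^ 2) b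
  have h2 : (∫ p : ℝ × ℝ, (({q : ℝ × ℝ | 0 < q.1}).indicator (1 : ℝ × ℝ → ℝ) p
      - ({q : ℝ × ℝ | 0 < cos θ * q.1 + sin θ * q.2}).indicator (1 : ℝ × ℝ → ℝ) p) ^ 2 * e2 p)
      / (2 * π) = θ / π := by
    rw [D2 h0 hπ, div_eq_div_iff (by positivity) pi_pos.ne']
    ring
  exact h.trans h2

end VarAux

/-- On the unit `N`-sphere (`N ≥ 1`) with great-circle distance
`d(x,y) = arccos⟪x,y⟫`, the function `g(x,y) = ϖ·d(x,y)/(2π)` is an indicator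
variogram for every `ϖ ∈ [0,1]`. -/
theorem linear_variogram_on_sphere_isIndicatorVariogram
    (N : ℕ) (hN : 1 ≤ N) (ϖ : ℝ) (hϖ : ϖ ∈ Set.Icc (0 : ℝ) 1) :
    IsIndicatorVariogram {x : EuclideanSpace ℝ (Fin (N + 1)) // ‖x‖ = 1}
      (fun q => ϖ * Real.arccos ⟪(q.1 : EuclideanSpace ℝ (Fin (N + 1))),
        (q.2 : EuclideanSpace ℝ (Fin (N + 1)))⟫ / (2 * π)) := by
  obtain ⟨hϖ0, hϖ1⟩ := hϖ
  obtain ⟨M, rfl⟩ : ∃ M, N = M + 1 := ⟨N - 1, (Nat.succ_pred_eq_of_pos hN).symm⟩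
  haveI hPμ : IsProbabilityMeasure (VarAux.μM M) := VarAux.isProb M
  haveI hPν : IsProbabilityMeasure ((volume : Measure ℝ).restrict (Set.Ioc (0:ℝ) 1)) := by
    constructor
    rw [Measure.restrict_apply_univ, Real.volume_Ioc]
    norm_num
  -- the ν-side integral
  have hν1 : ∫ t, (Set.Iic ϖ).indicator (1 : ℝ → ℝ) t
      ∂((volume : Measure ℝ).restrict (Set.Ioc (0:ℝ) 1)) = ϖ := by
    rw [integral_indicator measurableSet_Iic, Measure.restrict_restrict measurableSet_Iic]
    simp only [Pi.one_apply]
    rw [setIntegral_const, smul_eq_mul, mul_one,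
      show Set.Iic ϖ ∩ Set.Ioc (0:ℝ) 1 = Set.Ioc 0 ϖ by
        ext r
        simp only [Set.mem_inter_iff, Set.mem_Iic, Set.mem_Ioc]
        constructor
        · rintro ⟨h1, h2, h3⟩; exact ⟨h2, h1⟩
        · rintro ⟨h1, h2⟩; exact ⟨h2, h1, le_trans h2 hϖ1⟩,
      measureReal_def, Real.volume_Ioc, sub_zero, ENNReal.toReal_ofReal hϖ0]
  refine ⟨VarAux.Esp M × ℝ, inferInstance,
    (VarAux.μM M).prod ((volume : Measure ℝ).restrict (Set.Ioc (0:ℝ) 1)), inferInstance,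
    fun x ω => ({u : VarAux.Esp M |
        0 < ⟪u, (x : EuclideanSpace ℝ (Fin (M + 1 + 1)))⟫}).indicator
      (1 : VarAux.Esp M → ℝ) ω.1 * (Set.Iic ϖ).indicator (1 : ℝ → ℝ) ω.2, ?_, ?_, ?_, ?_⟩
  · -- measurability
    intro x
    have hSx : MeasurableSet {u : VarAux.Esp M |
        0 < ⟪u, (x : EuclideanSpace ℝ (Fin (M + 1 + 1)))⟫} :=
      measurableSet_lt measurable_const
        (Continuous.measurable (Continuous.inner continuous_id continuous_const))
    exact ((measurable_one.indicator hSx).comp measurable_fst).mul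
      ((measurable_one.indicator measurableSet_Iic).comp measurable_snd)
  · -- {0,1}-valued
    intro x ω
    beta_reduce
    by_cases h1 : ω.1 ∈ {u : VarAux.Esp M |
        0 < ⟪u, (x : EuclideanSpace ℝ (Fin (M + 1 + 1)))⟫}
    · by_cases h2 : ω.2 ∈ Set.Iic ϖ
      · rw [Set.indicator_of_mem h1, Set.indicator_of_mem h2]; norm_num
      · rw [Set.indicator_of_notMem h2]; norm_num
    · rw [Set.indicator_of_notMem h1]; norm_num
  · -- constant mean
    refine ⟨ϖ / 2, fun x => ?_⟩
    obtain ⟨b, hb0, -⟩ := VarAux.exists_onb M (x : EuclideanSpace ℝ (Fin (M + 1 + 1)))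
      (x : EuclideanSpace ℝ (Fin (M + 1 + 1))) x.2 x.2
    have hx_ind : ∀ u : VarAux.Esp M,
        ({u : VarAux.Esp M | 0 < ⟪u, (x : EuclideanSpace ℝ (Fin (M + 1 + 1)))⟫}).indicator
          (1 : VarAux.Esp M → ℝ) u
        = ({q : ℝ × ℝ | 0 < q.1}).indicator (1 : ℝ × ℝ → ℝ) (⟪u, b 0⟫, ⟪u, b 1⟫) := by
      intro u
      by_cases h : 0 < ⟪u, (x : EuclideanSpace ℝ (Fin (M + 1 + 1)))⟫
      · rw [Set.indicator_of_mem (show u ∈ {u : VarAux.Esp M |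
            0 < ⟪u, (x : EuclideanSpace ℝ (Fin (M + 1 + 1)))⟫} from h), Set.indicator_of_mem
          (show (⟪u, b 0⟫, ⟪u, b 1⟫) ∈ {q : ℝ × ℝ | 0 < q.1} by
            simp only [Set.mem_setOf_eq]; rw [hb0]; exact h)]
        rfl
      · rw [Set.indicator_of_notMem (show u ∉ {u : VarAux.Esp M |
            0 < ⟪u, (x : EuclideanSpace ℝ (Fin (M + 1 + 1)))⟫} from h), Set.indicator_of_notMem
          (show (⟪u, b 0⟫, ⟪u, b 1⟫) ∉ {q : ℝ × ℝ | 0 < q.1} by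
            simp only [Set.mem_setOf_eq]; rw [hb0]; exact h)]
    have h12 : ∫ u, ({u : VarAux.Esp M |
          0 < ⟪u, (x : EuclideanSpace ℝ (Fin (M + 1 + 1)))⟫}).indicator
          (1 : VarAux.Esp M → ℝ) u ∂(VarAux.μM M)
        = 1 / 2 :=
      (integral_congr_ae (Filter.Eventually.of_forall hx_ind)).trans (VarAux.key_L1 M b)
    have hp := integral_prod_mul (μ := VarAux.μM M)
      (ν := (volume : Measure ℝ).restrict (Set.Ioc (0:ℝ) 1))
      (({u : VarAux.Esp M |
        0 < ⟪u, (x : EuclideanSpace ℝ (Fin (M + 1 + 1)))⟫}).indicator (1 : VarAux.Esp M → ℝ))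
      ((Set.Iic ϖ).indicator (1 : ℝ → ℝ))
    exact hp.trans (by rw [h12, hν1]; ring)
  · -- the variogram identity
    intro x y
    obtain ⟨b, hb0, hby⟩ := VarAux.exists_onb M (x : EuclideanSpace ℝ (Fin (M + 1 + 1)))
      (y : EuclideanSpace ℝ (Fin (M + 1 + 1))) x.2 y.2
    have habs : |⟪(x : EuclideanSpace ℝ (Fin (M + 1 + 1))),
        (y : EuclideanSpace ℝ (Fin (M + 1 + 1)))⟫| ≤ 1 := by
      have h := abs_real_inner_le_norm (x : EuclideanSpace ℝ (Fin (M + 1 + 1)))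
        (y : EuclideanSpace ℝ (Fin (M + 1 + 1)))
      rw [x.2, y.2] at h
      simpa using h
    set t : ℝ := ⟪(x : EuclideanSpace ℝ (Fin (M + 1 + 1))),
      (y : EuclideanSpace ℝ (Fin (M + 1 + 1)))⟫ with htdef
    have hcos : Real.cos (Real.arccos t) = t :=
      Real.cos_arccos (by linarith [(abs_le.1 habs).1]) (by linarith [(abs_le.1 habs).2])
    have hsin : Real.sin (Real.arccos t) = √(1 - t ^ 2) := Real.sin_arccos t
    have hθ0 : 0 ≤ Real.arccos t := Real.arccos_nonneg t
    have hθπ : Real.arccos t ≤ π := Real.arccos_le_pi t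
    have hyu : ∀ u : VarAux.Esp M, ⟪u, (y : EuclideanSpace ℝ (Fin (M + 1 + 1)))⟫
        = Real.cos (Real.arccos t) * ⟪u, b 0⟫ + Real.sin (Real.arccos t) * ⟪u, b 1⟫ := by
      intro u
      conv_lhs => rw [hby]
      rw [inner_add_right, real_inner_smul_right, real_inner_smul_right, hb0, hcos, hsin]
    have hx_ind : ∀ u : VarAux.Esp M,
        ({u : VarAux.Esp M | 0 < ⟪u, (x : EuclideanSpace ℝ (Fin (M + 1 + 1)))⟫}).indicator
          (1 : VarAux.Esp M → ℝ) u
        = ({q : ℝ × ℝ | 0 < q.1}).indicator (1 : ℝ × ℝ → ℝ) (⟪u, b 0⟫, ⟪u, b 1⟫) := by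
      intro u
      by_cases h : 0 < ⟪u, (x : EuclideanSpace ℝ (Fin (M + 1 + 1)))⟫
      · rw [Set.indicator_of_mem (show u ∈ {u : VarAux.Esp M |
            0 < ⟪u, (x : EuclideanSpace ℝ (Fin (M + 1 + 1)))⟫} from h), Set.indicator_of_mem
          (show (⟪u, b 0⟫, ⟪u, b 1⟫) ∈ {q : ℝ × ℝ | 0 < q.1} by
            simp only [Set.mem_setOf_eq]; rw [hb0]; exact h)]
        rfl
      · rw [Set.indicator_of_notMem (show u ∉ {u : VarAux.Esp M |
            0 < ⟪u, (x : EuclideanSpace ℝ (Fin (M + 1 + 1)))⟫} from h), Set.indicator_of_notMem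
          (show (⟪u, b 0⟫, ⟪u, b 1⟫) ∉ {q : ℝ × ℝ | 0 < q.1} by
            simp only [Set.mem_setOf_eq]; rw [hb0]; exact h)]
    have hy_ind : ∀ u : VarAux.Esp M,
        ({u : VarAux.Esp M | 0 < ⟪u, (y : EuclideanSpace ℝ (Fin (M + 1 + 1)))⟫}).indicator
          (1 : VarAux.Esp M → ℝ) u
        = ({q : ℝ × ℝ | 0 < Real.cos (Real.arccos t) * q.1
            + Real.sin (Real.arccos t) * q.2}).indicator (1 : ℝ × ℝ → ℝ)
            (⟪u, b 0⟫, ⟪u, b 1⟫) := by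
      intro u
      by_cases h : 0 < ⟪u, (y : EuclideanSpace ℝ (Fin (M + 1 + 1)))⟫
      · rw [Set.indicator_of_mem (show u ∈ {u : VarAux.Esp M |
            0 < ⟪u, (y : EuclideanSpace ℝ (Fin (M + 1 + 1)))⟫} from h), Set.indicator_of_mem
          (show (⟪u, b 0⟫, ⟪u, b 1⟫) ∈ {q : ℝ × ℝ | 0 < Real.cos (Real.arccos t) * q.1
              + Real.sin (Real.arccos t) * q.2} by
            simp only [Set.mem_setOf_eq]; rw [← hyu u]; exact h)]
        rfl
      · rw [Set.indicator_of_notMem (show u ∉ {u : VarAux.Esp M |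
            0 < ⟪u, (y : EuclideanSpace ℝ (Fin (M + 1 + 1)))⟫} from h), Set.indicator_of_notMem
          (show (⟪u, b 0⟫, ⟪u, b 1⟫) ∉ {q : ℝ × ℝ | 0 < Real.cos (Real.arccos t) * q.1
              + Real.sin (Real.arccos t) * q.2} by
            simp only [Set.mem_setOf_eq]; rw [← hyu u]; exact h)]
    have hptw : ∀ ω : VarAux.Esp M × ℝ,
        (({u : VarAux.Esp M |
            0 < ⟪u, (x : EuclideanSpace ℝ (Fin (M + 1 + 1)))⟫}).indicator
            (1 : VarAux.Esp M → ℝ) ω.1 * (Set.Iic ϖ).indicator (1 : ℝ → ℝ) ω.2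
          - ({u : VarAux.Esp M |
            0 < ⟪u, (y : EuclideanSpace ℝ (Fin (M + 1 + 1)))⟫}).indicator
            (1 : VarAux.Esp M → ℝ) ω.1 * (Set.Iic ϖ).indicator (1 : ℝ → ℝ) ω.2) ^ 2
        = (({q : ℝ × ℝ | 0 < q.1}).indicator (1 : ℝ × ℝ → ℝ) (⟪ω.1, b 0⟫, ⟪ω.1, b 1⟫)
            - ({q : ℝ × ℝ | 0 < Real.cos (Real.arccos t) * q.1
                + Real.sin (Real.arccos t) * q.2}).indicator (1 : ℝ × ℝ → ℝ)
                (⟪ω.1, b 0⟫, ⟪ω.1, b 1⟫)) ^ 2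
          * (Set.Iic ϖ).indicator (1 : ℝ → ℝ) ω.2 := by
      intro ω
      rw [← hx_ind ω.1, ← hy_ind ω.1]
      by_cases h2 : ω.2 ∈ Set.Iic ϖ
      · rw [Set.indicator_of_mem h2]
        simp only [Pi.one_apply, mul_one]
      · rw [Set.indicator_of_notMem h2]
        ring
    have hI : ∫ ω, (({u : VarAux.Esp M |
          0 < ⟪u, (x : EuclideanSpace ℝ (Fin (M + 1 + 1)))⟫}).indicator
            (1 : VarAux.Esp M → ℝ) ω.1 * (Set.Iic ϖ).indicator (1 : ℝ → ℝ) ω.2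
          - ({u : VarAux.Esp M |
          0 < ⟪u, (y : EuclideanSpace ℝ (Fin (M + 1 + 1)))⟫}).indicator
            (1 : VarAux.Esp M → ℝ) ω.1 * (Set.Iic ϖ).indicator (1 : ℝ → ℝ) ω.2) ^ 2
        ∂((VarAux.μM M).prod ((volume : Measure ℝ).restrict (Set.Ioc (0:ℝ) 1)))
        = Real.arccos t / π * ϖ := by
      have hcongr := integral_congr_ae (μ := (VarAux.μM M).prod
        ((volume : Measure ℝ).restrict (Set.Ioc (0:ℝ) 1)))
        (Filter.Eventually.of_forall hptw)
      have hp := integral_prod_mul (μ := VarAux.μM M)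
        (ν := (volume : Measure ℝ).restrict (Set.Ioc (0:ℝ) 1))
        (fun u : VarAux.Esp M =>
          (({q : ℝ × ℝ | 0 < q.1}).indicator (1 : ℝ × ℝ → ℝ) (⟪u, b 0⟫, ⟪u, b 1⟫)
          - ({q : ℝ × ℝ | 0 < Real.cos (Real.arccos t) * q.1
              + Real.sin (Real.arccos t) * q.2}).indicator (1 : ℝ × ℝ → ℝ)
              (⟪u, b 0⟫, ⟪u, b 1⟫)) ^ 2)
        ((Set.Iic ϖ).indicator (1 : ℝ → ℝ))
      refine hcongr.trans (hp.trans ?_)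
      rw [hν1]
      have hD := VarAux.key_D2 M hθ0 hθπ b
      exact congrArg (· * ϖ) hD
    show ϖ * Real.arccos t / (2 * π) = _
    rw [hI]
    field_simp
end VarAux
end
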